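/- arXiv:2306.03613 — 10 statements merged into one kernel-verified Lean document; each statement's English description precedes it below -/
import Mathlib

section
/- Let C be a clutter over a finite ground set V. If C is minimally non-ideal (C is non-ideal but every proper minor of C is ideal), then there is no subset U of V such that every member of C intersects U in exactly one element. -/
open scoped Classical
noncomputable section

/-- A clutter: a family of subsets of the ground set, none containing another. -/
def IsClutter {V : Type*} (C : Finset (Finset V)) : Prop :=
  ∀ A ∈ C, ∀ B ∈ C, A ⊆ B → A = B

/-- Membership in the set covering polyhedron
`Q(C) = {x ≥ 0 : ∑_{v ∈ A} x v ≥ 1 for every member A}`. -/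
def MemQ {V : Type*} (C : Finset (Finset V)) (x : V → ℝ) : Prop :=
  (∀ v, 0 ≤ x v) ∧ ∀ A ∈ C, 1 ≤ ∑ v ∈ A, x v

/-- An extreme point of `Q(C)`. -/
def IsExtremePt {V : Type*} (C : Finset (Finset V)) (x : V → ℝ) : Prop :=
  MemQ C x ∧ ∀ y z : V → ℝ, MemQ C y → MemQ C z →
    (x = fun v => (y v + z v) / 2) → y = z

/-- A clutter is ideal if every extreme point of `Q(C)` is integral. -/
def IdealClutter {V : Type*} (C : Finset (Finset V)) : Prop :=
  ∀ x : V → ℝ, IsExtremePt C x → ∀ v, ∃ k : ℤ, x v = (k : ℝ)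

/-- The inclusion-wise minimal sets of a family. -/
def minimalSets {V : Type*} (F : Finset (Finset V)) : Finset (Finset V) :=
  F.filter fun A => ∀ B ∈ F, B ⊆ A → B = A

/-- The minor `C \ I / J` obtained after deleting `I` and contracting `J`. -/
def minorCl {V : Type*} (C : Finset (Finset V)) (I J : Finset V) : Finset (Finset V) :=
  minimalSets ((C.filter fun A => A ∩ I = ∅).image fun A => A \ J)

lemma mem_of_mem_minimalSets {V : Type*} {F : Finset (Finset V)} {A : Finset V}
    (h : A ∈ minimalSets F) : A ∈ F :=
  Finset.mem_of_mem_filter A h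

/-- Every member of a finite family contains a minimal member. -/
lemma exists_minimal_subset {V : Type*} (F : Finset (Finset V)) :
    ∀ S ∈ F, ∃ B ∈ minimalSets F, B ⊆ S := by
  intro S
  induction S using Finset.strongInductionOn with
  | _ S ih =>
    intro hS
    by_cases h : ∀ B ∈ F, B ⊆ S → B = S
    · exact ⟨S, Finset.mem_filter.mpr ⟨hS, h⟩, subset_rfl⟩
    · push_neg at h
      obtain ⟨B, hBF, hBS, hne⟩ := h
      obtain ⟨B', h1, h2⟩ := ih B (ssubset_of_subset_of_ne hBS hne) hBF
      exact ⟨B', h1, h2.trans hBS⟩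

/-- a minimally non-ideal clutter (non-ideal, but every proper minor is
ideal) has no set `U` meeting every member exactly once. -/
theorem stmt0 {V : Type*} [Fintype V] (C : Finset (Finset V)) (hC : IsClutter C)
    (hni : ¬ IdealClutter C)
    (hmni : ∀ I J : Finset V, Disjoint I J → (I ∪ J).Nonempty →
      IdealClutter (minorCl C I J)) :
    ¬ ∃ U : Finset V, ∀ A ∈ C, (A ∩ U).card = 1 := by
  rintro ⟨U, hU⟩
  rw [IdealClutter] at hni
  push_neg at hni
  obtain ⟨x, hx, w, hw⟩ := hni
  obtain ⟨⟨hx0, hxA⟩, hxext⟩ := hx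
  -- Step 1 : every coordinate of x is positive
  have hpos : ∀ v, 0 < x v := by
    intro v
    rcases (hx0 v).lt_or_eq with h | h
    · exact h
    exfalso
    have hD := hmni ∅ {v} (Finset.disjoint_empty_left _) (by simp)
    set F : Finset (Finset V) :=
      ((C.filter fun A => A ∩ (∅ : Finset V) = ∅).image fun A => A \ {v}) with hF
    have hmemF : ∀ A ∈ C, A \ {v} ∈ F := by
      intro A hA
      refine Finset.mem_image.mpr ⟨A, Finset.mem_filter.mpr ⟨hA, ?_⟩, rfl⟩
      exact Finset.inter_empty A
    -- any point of Q(minor) lies in Q(C)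
    have hQ : ∀ y : V → ℝ, MemQ (minorCl C ∅ {v}) y → MemQ C y := by
      rintro y ⟨hy0, hyA⟩
      refine ⟨hy0, fun A hA => ?_⟩
      obtain ⟨B, hB, hBsub⟩ := exists_minimal_subset F (A \ {v}) (hmemF A hA)
      calc (1:ℝ) ≤ ∑ u ∈ B, y u := hyA B hB
        _ ≤ ∑ u ∈ A, y u := by
            refine Finset.sum_le_sum_of_subset_of_nonneg
              (hBsub.trans (Finset.sdiff_subset)) (fun i _ _ => hy0 i)
    -- x is an extreme point of the minor
    have hxD : IsExtremePt (minorCl C ∅ {v}) x := by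
      refine ⟨⟨hx0, fun B hB => ?_⟩, fun y z hy hz hyz => hxext y z (hQ y hy) (hQ z hz) hyz⟩
      have hBF : B ∈ F := mem_of_mem_minimalSets hB
      obtain ⟨A, hAf, hAB⟩ := Finset.mem_image.mp hBF
      have hA : A ∈ C := (Finset.mem_filter.mp hAf).1
      have hsum : ∑ u ∈ A, x u = ∑ u ∈ B, x u := by
        subst hAB
        by_cases hv : v ∈ A
        case neg =>
          rw [Finset.sdiff_eq_self_of_disjoint (Finset.disjoint_singleton_right.mpr hv)]
        case pos =>
          have : A = (A \ {v}) ∪ {v} := by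
            ext u
            simp only [Finset.mem_union, Finset.mem_sdiff, Finset.mem_singleton]
            constructor
            · intro hu
              by_cases h' : u = v
              · exact Or.inr h'
              · exact Or.inl ⟨hu, h'⟩
            · rintro (⟨hu, _⟩ | rfl) <;> assumption
          calc ∑ u ∈ A, x u = ∑ u ∈ (A \ {v}) ∪ {v}, x u := by rw [← this]
            _ = ∑ u ∈ A \ {v}, x u + ∑ u ∈ ({v} : Finset V), x u :=
                Finset.sum_union Finset.sdiff_disjoint
            _ = ∑ u ∈ A \ {v}, x u := by simp [← h]
      exact le_of_le_of_eq (hxA A hA) hsum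
    obtain ⟨k, hk⟩ := hD x hxD w
    exact hw k hk
  -- Step 2 : perturb x along d = χ_U - x
  set d : V → ℝ := fun v => (if v ∈ U then (1:ℝ) else 0) - x v with hd
  have hdsum : ∀ A ∈ C, ∑ v ∈ A, d v = 1 - ∑ v ∈ A, x v := by
    intro A hA
    have : ∑ v ∈ A, (if v ∈ U then (1:ℝ) else 0) = ((A ∩ U).card : ℝ) := by
      rw [Finset.sum_ite_mem]
      simp
    rw [hd]
    rw [Finset.sum_sub_distrib, this, hU A hA]
    norm_num
  -- choose θ
  have hVne : (Finset.univ : Finset V).Nonempty := ⟨w, Finset.mem_univ w⟩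
  set ε : ℝ := Finset.univ.inf' hVne (fun v => x v / (|d v| + 1)) with hε
  have hεpos : 0 < ε := by
    rw [hε]
    apply (Finset.lt_inf'_iff hVne).mpr
    intro v _
    exact div_pos (hpos v) (by positivity)
  set θ : ℝ := min ε 1 with hθ
  have hθpos : 0 < θ := lt_min hεpos one_pos
  have hθ1 : θ ≤ 1 := min_le_right _ _
  have hθd : ∀ v, θ * |d v| ≤ x v := by
    intro v
    have h1 : θ ≤ x v / (|d v| + 1) :=
      le_trans (min_le_left _ _) (Finset.inf'_le _ (Finset.mem_univ v))
    have h2 : θ * (|d v| + 1) ≤ x v := by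
      rw [div_eq_mul_inv] at h1
      have := mul_le_mul_of_nonneg_right h1 (by positivity : (0:ℝ) ≤ |d v| + 1)
      calc θ * (|d v| + 1) ≤ x v * (|d v| + 1)⁻¹ * (|d v| + 1) := this
        _ = x v := by field_simp
    nlinarith [abs_nonneg (d v), hθpos]
  -- the two perturbed points
  set y : V → ℝ := fun v => x v + θ * d v with hy
  set z : V → ℝ := fun v => x v - θ * d v with hz
  have hymem : MemQ C y := by
    constructor
    · intro v
      have := hθd v
      have := neg_abs_le (d v)
      show 0 ≤ x v + θ * d v
      nlinarith [hθpos.le, abs_nonneg (d v)]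
    · intro A hA
      rw [hy]
      simp only
      rw [Finset.sum_add_distrib, ← Finset.mul_sum, hdsum A hA]
      have hS := hxA A hA
      nlinarith
  have hzmem : MemQ C z := by
    constructor
    · intro v
      have := hθd v
      have := le_abs_self (d v)
      show 0 ≤ x v - θ * d v
      nlinarith [hθpos.le]
    · intro A hA
      rw [hz]
      simp only
      rw [Finset.sum_sub_distrib, ← Finset.mul_sum, hdsum A hA]
      have hS := hxA A hA
      nlinarith
  have hmid : x = fun v => (y v + z v) / 2 := by
    funext v
    rw [hy, hz]
    ring
  have hyz := hxext y z hymem hzmem hmid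
  have hdw : d w = 0 := by
    have := congrFun hyz w
    rw [hy, hz] at this
    simp only at this
    nlinarith
  rw [hd] at hdw
  by_cases hwU : w ∈ U
  · refine hw 1 ?_
    simp only [if_pos hwU] at hdw
    push_cast
    linarith
  · refine hw 0 ?_
    simp only [if_neg hwU] at hdw
    push_cast
    linarith
end
end

section
/- Let C1 and C2 be clutters over disjoint ground sets E1 and E2. If C1 and C2 are both ideal, then the product clutter C1 x C2 := {C cup D : C in C1, D in C2} over ground set E1 cup E2 is ideal. -/
open scoped Classical
noncomputable section

/-- The product of two clutters over disjoint ground sets `E1`, `E2`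
(disjointness realized by the sum type): members are `A ∪ B` with `A ∈ C1`, `B ∈ C2`. -/
def prodCl {E1 E2 : Type*} (C1 : Finset (Finset E1)) (C2 : Finset (Finset E2)) :
    Finset (Finset (E1 ⊕ E2)) :=
  (C1 ×ˢ C2).image fun p => p.1.image Sum.inl ∪ p.2.image Sum.inr

lemma sum_split {E1 E2 : Type*} (A : Finset E1) (B : Finset E2) (x : E1 ⊕ E2 → ℝ) :
    ∑ v ∈ A.image Sum.inl ∪ B.image Sum.inr, x v
      = ∑ e ∈ A, x (Sum.inl e) + ∑ e ∈ B, x (Sum.inr e) := by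
  have hd : Disjoint (A.image Sum.inl) (B.image Sum.inr) := by
    simp [Finset.disjoint_left]
  rw [Finset.sum_union hd, Finset.sum_image (fun _ _ _ _ h => Sum.inl.inj h),
      Finset.sum_image (fun _ _ _ _ h => Sum.inr.inj h)]

lemma mem_prodCl {E1 E2 : Type*} {C1 : Finset (Finset E1)} {C2 : Finset (Finset E2)}
    {A : Finset E1} {B : Finset E2} (hA : A ∈ C1) (hB : B ∈ C2) :
    A.image Sum.inl ∪ B.image Sum.inr ∈ prodCl C1 C2 :=
  Finset.mem_image.mpr ⟨(A, B), Finset.mem_product.mpr ⟨hA, hB⟩, rfl⟩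

lemma sum_ite_single {α : Type*} (U : Finset α) (w : α) (c : ℝ)
    [∀ u : α, Decidable (u = w)] [Decidable (w ∈ U)] :
    ∑ u ∈ U, (if u = w then c else 0) = if w ∈ U then c else 0 := by
  split_ifs with h
  · rw [Finset.sum_eq_single_of_mem w h (fun b _ hb => if_neg hb)]
    exact if_pos rfl
  · exact Finset.sum_eq_zero fun u hu => if_neg fun e => h (by rwa [← e])

lemma perturb_lemma {V : Type*} {C : Finset (Finset V)} {x δ : V → ℝ} (hx : IsExtremePt C x)
    (hy : MemQ C (fun u => x u + δ u)) (hz : MemQ C (fun u => x u - δ u))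
    {w : V} (hδ : δ w ≠ 0) : False := by
  have h := hx.2 _ _ hy hz (funext fun u => by ring)
  have h2 : x w + δ w = x w - δ w := congrFun h w
  exact hδ (by linarith)

/-- the product of two ideal clutters over disjoint ground sets is ideal. -/
theorem stmt1 {E1 E2 : Type*} [Fintype E1] [Fintype E2]
    (C1 : Finset (Finset E1)) (C2 : Finset (Finset E2))
    (h1 : IsClutter C1) (h2 : IsClutter C2)
    (hi1 : IdealClutter C1) (hi2 : IdealClutter C2) :
    IdealClutter (prodCl C1 C2) := by
  intro x hx v
  have hpos : ∀ u, 0 ≤ x u := hx.1.1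
  have hcons : ∀ S ∈ prodCl C1 C2, 1 ≤ ∑ u ∈ S, x u := hx.1.2
  have hext := hx.2
  -- empty cases
  have hzero_of_empty : prodCl C1 C2 = ∅ → x v = 0 := by
    intro hE
    by_contra hne
    set δ : (E1 ⊕ E2) → ℝ := fun u => if u = v then x v else 0 with hδdef
    have hδpos : ∀ u, 0 ≤ δ u := by
      intro u
      rcases eq_or_ne u v with h | h
      · simpa [hδdef, h] using hpos v
      · simp [hδdef, h]
    refine perturb_lemma (δ := δ) hx ⟨fun u => ?_, fun S hS => by simp [hE] at hS⟩
      ⟨fun u => ?_, fun S hS => by simp [hE] at hS⟩ (w := v) ?_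
    · show (0:ℝ) ≤ x u + δ u
      have := hpos u; have := hδpos u; linarith
    · rcases eq_or_ne u v with h | h
      · simp [hδdef, h]
      · simp [hδdef, h]; exact hpos u
    · simp [hδdef]; exact hne
  by_cases hC1 : C1.Nonempty
  swap
  · have h0 : x v = 0 := hzero_of_empty
      (by simp [prodCl, Finset.not_nonempty_iff_eq_empty.mp hC1])
    exact ⟨0, by simp [h0]⟩
  by_cases hC2 : C2.Nonempty
  swap
  · have h0 : x v = 0 := hzero_of_empty
      (by simp [prodCl, Finset.not_nonempty_iff_eq_empty.mp hC2])
    exact ⟨0, by simp [h0]⟩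
  -- main case
  set a : ℝ := C1.inf' hC1 (fun A => ∑ e ∈ A, x (Sum.inl e)) with hadef
  set b : ℝ := C2.inf' hC2 (fun B => ∑ e ∈ B, x (Sum.inr e)) with hbdef
  obtain ⟨A0, hA0, hA0a⟩ := Finset.exists_mem_eq_inf' hC1 (fun A => ∑ e ∈ A, x (Sum.inl e))
  obtain ⟨B0, hB0, hB0b⟩ := Finset.exists_mem_eq_inf' hC2 (fun B => ∑ e ∈ B, x (Sum.inr e))
  have haA : ∀ A ∈ C1, a ≤ ∑ e ∈ A, x (Sum.inl e) := fun A hA => Finset.inf'_le _ hA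
  have hbB : ∀ B ∈ C2, b ≤ ∑ e ∈ B, x (Sum.inr e) := fun B hB => Finset.inf'_le _ hB
  have ha0 : 0 ≤ a := by
    rw [hadef, hA0a]; exact Finset.sum_nonneg fun e _ => hpos _
  have hb0 : 0 ≤ b := by
    rw [hbdef, hB0b]; exact Finset.sum_nonneg fun e _ => hpos _
  have hab : 1 ≤ a + b := by
    have h := hcons _ (mem_prodCl hA0 hB0)
    rw [sum_split] at h
    rw [hadef, hbdef, hA0a, hB0b]
    exact h
  -- not both positive
  have hnotboth : ¬(0 < a ∧ 0 < b) := by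
    rintro ⟨hap, hbp⟩
    have habp : 0 < a + b := by linarith
    set ε : ℝ := (a + b)⁻¹ with hε
    have hεp : 0 < ε := inv_pos.mpr habp
    have hεa : ε * a ≤ 1 := by
      rw [hε, inv_mul_le_iff₀ habp]; linarith
    have hεb : ε * b ≤ 1 := by
      rw [hε, inv_mul_le_iff₀ habp]; linarith
    have hc1 : (0:ℝ) ≤ 1 + ε * b := by nlinarith
    have hc2 : (0:ℝ) ≤ 1 - ε * a := by linarith
    have hc3 : (0:ℝ) ≤ 1 - ε * b := by linarith
    have hc4 : (0:ℝ) ≤ 1 + ε * a := by nlinarith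
    set y : E1 ⊕ E2 → ℝ :=
      Sum.elim (fun e => x (Sum.inl e) * (1 + ε * b)) (fun e => x (Sum.inr e) * (1 - ε * a))
      with hydef
    set z : E1 ⊕ E2 → ℝ :=
      Sum.elim (fun e => x (Sum.inl e) * (1 - ε * b)) (fun e => x (Sum.inr e) * (1 + ε * a))
      with hzdef
    have hyQ : MemQ (prodCl C1 C2) y := by
      refine ⟨fun u => ?_, fun S hS => ?_⟩
      · rcases u with e | e
        · simpa [hydef] using mul_nonneg (hpos (Sum.inl e)) hc1
        · simpa [hydef] using mul_nonneg (hpos (Sum.inr e)) hc2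
      · obtain ⟨⟨A, B⟩, hAB, rfl⟩ := Finset.mem_image.mp hS
        rw [Finset.mem_product] at hAB
        rw [sum_split]
        simp only [hydef, Sum.elim_inl, Sum.elim_inr, ← Finset.sum_mul]
        have e1 : a * (1 + ε * b) ≤ (∑ e ∈ A, x (Sum.inl e)) * (1 + ε * b) :=
          mul_le_mul_of_nonneg_right (haA A hAB.1) hc1
        have e2 : b * (1 - ε * a) ≤ (∑ e ∈ B, x (Sum.inr e)) * (1 - ε * a) :=
          mul_le_mul_of_nonneg_right (hbB B hAB.2) hc2
        nlinarith
    have hzQ : MemQ (prodCl C1 C2) z := by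
      refine ⟨fun u => ?_, fun S hS => ?_⟩
      · rcases u with e | e
        · simpa [hzdef] using mul_nonneg (hpos (Sum.inl e)) hc3
        · simpa [hzdef] using mul_nonneg (hpos (Sum.inr e)) hc4
      · obtain ⟨⟨A, B⟩, hAB, rfl⟩ := Finset.mem_image.mp hS
        rw [Finset.mem_product] at hAB
        rw [sum_split]
        simp only [hzdef, Sum.elim_inl, Sum.elim_inr, ← Finset.sum_mul]
        have e1 : a * (1 - ε * b) ≤ (∑ e ∈ A, x (Sum.inl e)) * (1 - ε * b) :=
          mul_le_mul_of_nonneg_right (haA A hAB.1) hc3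
        have e2 : b * (1 + ε * a) ≤ (∑ e ∈ B, x (Sum.inr e)) * (1 + ε * a) :=
          mul_le_mul_of_nonneg_right (hbB B hAB.2) hc4
        nlinarith
    have hmid : x = fun u => (y u + z u) / 2 := by
      funext u
      rcases u with e | e <;> simp [hydef, hzdef] <;> ring
    have hyz := hext y z hyQ hzQ hmid
    have hApos : 0 < ∑ e ∈ A0, x (Sum.inl e) := by rw [← hA0a, ← hadef]; exact hap
    obtain ⟨e0, he0, hfe0⟩ : ∃ e ∈ A0, 0 < x (Sum.inl e) := by
      by_contra hcon
      push_neg at hcon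
      have : ∑ e ∈ A0, x (Sum.inl e) ≤ 0 := Finset.sum_nonpos hcon
      linarith
    have := congrFun hyz (Sum.inl e0)
    simp only [hydef, hzdef, Sum.elim_inl] at this
    nlinarith [mul_pos hfe0 (mul_pos hεp hbp)]
  have hcase : a = 0 ∨ b = 0 := by
    by_contra hcon
    push_neg at hcon
    exact hnotboth ⟨lt_of_le_of_ne ha0 (Ne.symm hcon.1), lt_of_le_of_ne hb0 (Ne.symm hcon.2)⟩
  rcases hcase with ha' | hb'
  · -- a = 0 : x is zero on the left, extreme on the right
    have hb1 : 1 ≤ b := by linarith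
    have hf0 : ∀ e, x (Sum.inl e) = 0 := by
      intro e
      by_contra hne
      have hfe : 0 < x (Sum.inl e) := lt_of_le_of_ne (hpos _) (Ne.symm hne)
      set δ : (E1 ⊕ E2) → ℝ :=
        Sum.elim (fun e' => if e' = e then x (Sum.inl e) else 0) (fun _ => 0) with hδdef
      have hδpos : ∀ u, 0 ≤ δ u := by
        intro u
        rcases u with e' | e'
        · rw [hδdef]; simp only [Sum.elim_inl]
          split_ifs with h
          · exact hpos _
          · exact le_refl 0
        · simp [hδdef]
      have hδle : ∀ u, δ u ≤ x u := by
        intro u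
        rcases u with e' | e'
        · rw [hδdef]; simp only [Sum.elim_inl]
          split_ifs with h
          · exact le_of_eq (by rw [h])
          · exact hpos _
        · simp [hδdef]; exact hpos _
      refine perturb_lemma (δ := δ) hx ⟨fun u => ?_, fun S hS => ?_⟩ ⟨fun u => ?_, fun S hS => ?_⟩
        (w := Sum.inl e) ?_
      · show (0:ℝ) ≤ x u + δ u
        have := hpos u; have := hδpos u; linarith
      · calc (1:ℝ) ≤ ∑ u ∈ S, x u := hcons S hS
          _ ≤ ∑ u ∈ S, (x u + δ u) := Finset.sum_le_sum fun u _ => by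
              have := hδpos u; linarith
      · show (0:ℝ) ≤ x u - δ u
        have := hδle u; linarith
      · obtain ⟨⟨A, B⟩, hAB, rfl⟩ := Finset.mem_image.mp hS
        rw [Finset.mem_product] at hAB
        rw [Finset.sum_sub_distrib, sum_split, sum_split]
        simp only [hδdef, Sum.elim_inl, Sum.elim_inr, Finset.sum_const_zero, add_zero]
        rw [sum_ite_single A e (x (Sum.inl e))]
        have hbB' := hbB B hAB.2
        by_cases he : e ∈ A
        · have h1 : x (Sum.inl e) ≤ ∑ u ∈ A, x (Sum.inl u) :=
            Finset.single_le_sum (fun i _ => hpos _) he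
          rw [if_pos he]
          linarith
        · rw [if_neg he]
          have hAnn : 0 ≤ ∑ u ∈ A, x (Sum.inl u) := Finset.sum_nonneg fun _ _ => hpos _
          linarith
      · simp [hδdef]
        exact hne
    have hgx : IsExtremePt C2 (fun e => x (Sum.inr e)) := by
      refine ⟨⟨fun e => hpos _, fun B hB => ?_⟩, ?_⟩
      · have := hbB B hB; linarith
      · intro y z hy hz hmid
        have hY : MemQ (prodCl C1 C2) (Sum.elim (fun _ => 0) y) := by
          refine ⟨fun u => ?_, fun S hS => ?_⟩
          · rcases u with e | e
            · simp
            · simpa using hy.1 e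
          · obtain ⟨⟨A, B⟩, hAB, rfl⟩ := Finset.mem_image.mp hS
            rw [Finset.mem_product] at hAB
            rw [sum_split]
            simpa using hy.2 B hAB.2
        have hZ : MemQ (prodCl C1 C2) (Sum.elim (fun _ => 0) z) := by
          refine ⟨fun u => ?_, fun S hS => ?_⟩
          · rcases u with e | e
            · simp
            · simpa using hz.1 e
          · obtain ⟨⟨A, B⟩, hAB, rfl⟩ := Finset.mem_image.mp hS
            rw [Finset.mem_product] at hAB
            rw [sum_split]
            simpa using hz.2 B hAB.2
        have h := hext _ _ hY hZ (funext fun u => by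
          rcases u with e | e
          · simp [hf0 e]
          · simpa using congrFun hmid e)
        funext e
        simpa using congrFun h (Sum.inr e)
    rcases v with e | e
    · exact ⟨0, by simpa using hf0 e⟩
    · exact hi2 _ hgx e
  · -- b = 0 : symmetric
    have ha1 : 1 ≤ a := by linarith
    have hg0 : ∀ e, x (Sum.inr e) = 0 := by
      intro e
      by_contra hne
      have hfe : 0 < x (Sum.inr e) := lt_of_le_of_ne (hpos _) (Ne.symm hne)
      set δ : (E1 ⊕ E2) → ℝ :=
        Sum.elim (fun _ => 0) (fun e' => if e' = e then x (Sum.inr e) else 0) with hδdef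
      have hδpos : ∀ u, 0 ≤ δ u := by
        intro u
        rcases u with e' | e'
        · simp [hδdef]
        · rw [hδdef]; simp only [Sum.elim_inr]
          split_ifs with h
          · exact hpos _
          · exact le_refl 0
      have hδle : ∀ u, δ u ≤ x u := by
        intro u
        rcases u with e' | e'
        · simp [hδdef]; exact hpos _
        · rw [hδdef]; simp only [Sum.elim_inr]
          split_ifs with h
          · exact le_of_eq (by rw [h])
          · exact hpos _
      refine perturb_lemma (δ := δ) hx ⟨fun u => ?_, fun S hS => ?_⟩ ⟨fun u => ?_, fun S hS => ?_⟩
        (w := Sum.inr e) ?_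
      · show (0:ℝ) ≤ x u + δ u
        have := hpos u; have := hδpos u; linarith
      · calc (1:ℝ) ≤ ∑ u ∈ S, x u := hcons S hS
          _ ≤ ∑ u ∈ S, (x u + δ u) := Finset.sum_le_sum fun u _ => by
              have := hδpos u; linarith
      · show (0:ℝ) ≤ x u - δ u
        have := hδle u; linarith
      · obtain ⟨⟨A, B⟩, hAB, rfl⟩ := Finset.mem_image.mp hS
        rw [Finset.mem_product] at hAB
        rw [Finset.sum_sub_distrib, sum_split, sum_split]
        simp only [hδdef, Sum.elim_inl, Sum.elim_inr, Finset.sum_const_zero, zero_add]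
        rw [sum_ite_single B e (x (Sum.inr e))]
        have haA' := haA A hAB.1
        by_cases he : e ∈ B
        · have h1 : x (Sum.inr e) ≤ ∑ u ∈ B, x (Sum.inr u) :=
            Finset.single_le_sum (fun i _ => hpos _) he
          rw [if_pos he]
          linarith
        · rw [if_neg he]
          have hBnn : 0 ≤ ∑ u ∈ B, x (Sum.inr u) := Finset.sum_nonneg fun _ _ => hpos _
          linarith
      · simp [hδdef]
        exact hne
    have hgx : IsExtremePt C1 (fun e => x (Sum.inl e)) := by
      refine ⟨⟨fun e => hpos _, fun A hA => ?_⟩, ?_⟩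
      · have := haA A hA; linarith
      · intro y z hy hz hmid
        have hY : MemQ (prodCl C1 C2) (Sum.elim y (fun _ => 0)) := by
          refine ⟨fun u => ?_, fun S hS => ?_⟩
          · rcases u with e | e
            · simpa using hy.1 e
            · simp
          · obtain ⟨⟨A, B⟩, hAB, rfl⟩ := Finset.mem_image.mp hS
            rw [Finset.mem_product] at hAB
            rw [sum_split]
            simpa using hy.2 A hAB.1
        have hZ : MemQ (prodCl C1 C2) (Sum.elim z (fun _ => 0)) := by
          refine ⟨fun u => ?_, fun S hS => ?_⟩
          · rcases u with e | e
            · simpa using hz.1 e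
            · simp
          · obtain ⟨⟨A, B⟩, hAB, rfl⟩ := Finset.mem_image.mp hS
            rw [Finset.mem_product] at hAB
            rw [sum_split]
            simpa using hz.2 A hAB.1
        have h := hext _ _ hY hZ (funext fun u => by
          rcases u with e | e
          · simpa using congrFun hmid e
          · simp [hg0 e])
        funext e
        simpa using congrFun h (Sum.inl e)
    rcases v with e | e
    · exact hi1 _ hgx e
    · exact ⟨0, by simpa using hg0 e⟩
end
end

section
/- Let C1 and C2 be clutters over disjoint ground sets E1 and E2. If C1 and C2 both have the max-flow min-cut property, then the product clutter C1 x C2 := {C cup D : C in C1, D in C2} has the max-flow min-cut property. -/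
open scoped Classical
noncomputable section

/-- An integral cover: a nonnegative integral vector hitting every member at least once. -/
def IsCover {V : Type*} (C : Finset (Finset V)) (x : V → ℕ) : Prop :=
  ∀ A ∈ C, 1 ≤ ∑ v ∈ A, x v

/-- An integral packing `y` of the members with congestion at most `w`. -/
def IsPacking {V : Type*} [Fintype V] (C : Finset (Finset V)) (w : V → ℕ)
    (y : Finset V → ℕ) : Prop :=
  ∀ v : V, (∑ A ∈ C.filter fun A => v ∈ A, y A) ≤ w v

/-- The max-flow min-cut property: for every weight `w`, the minimum weight of a cover
equals the maximum value of a `w`-packing.  (By weak LP duality this is equivalent to the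
existence of a cover and a packing with equal objective values.) -/
def HasMFMC {V : Type*} [Fintype V] (C : Finset (Finset V)) : Prop :=
  ∀ w : V → ℕ, ∃ (x : V → ℕ) (y : Finset V → ℕ),
    IsCover C x ∧ IsPacking C w y ∧ (∑ v, w v * x v) = ∑ A ∈ C, y A

namespace MFMCAux
open Finset

lemma sum_count_eq {α : Type*} [DecidableEq α] (Q : Multiset α) (F : Finset α) :
    (∑ S ∈ F, Q.count S) = Multiset.card (Q.filter (· ∈ F)) := by
  induction Q using Multiset.induction_on with
  | empty => simp
  | cons a Q ih =>
    simp only [Multiset.count_cons, Finset.sum_add_distrib, ih, Multiset.filter_cons]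
    rw [Finset.sum_ite_eq' F a fun _ => 1]
    by_cases h : a ∈ F <;> simp [h, add_comm]

lemma countP_replicate {α : Type*} (p : α → Prop) [DecidablePred p] (n : ℕ) (a : α) :
    Multiset.countP p (Multiset.replicate n a) = if p a then n else 0 := by
  induction n with
  | zero => simp
  | succ n ih =>
    rw [Multiset.replicate_succ, Multiset.countP_cons, ih]
    split_ifs <;> omega

lemma countP_repsum {α ι : Type*} (s : Finset ι) (g : ι → α) (y : ι → ℕ)
    (p : α → Prop) [DecidablePred p] :
    Multiset.countP p (∑ i ∈ s, Multiset.replicate (y i) (g i))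
      = ∑ i ∈ s.filter fun i => p (g i), y i := by
  classical
  induction s using Finset.induction_on with
  | empty => simp
  | @insert a s h ih =>
    rw [Finset.sum_insert h, Multiset.countP_add, countP_replicate, ih, Finset.filter_insert]
    by_cases hp : p (g a)
    · rw [if_pos hp, if_pos hp, Finset.sum_insert (by simp [h])]
    · rw [if_neg hp, if_neg hp, zero_add]

lemma card_repsum {α ι : Type*} (s : Finset ι) (g : ι → α) (y : ι → ℕ) :
    Multiset.card (∑ i ∈ s, Multiset.replicate (y i) (g i)) = ∑ i ∈ s, y i := by
  classical
  induction s using Finset.induction_on with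
  | empty => simp
  | @insert a s h ih => simp [Finset.sum_insert h, ih]

lemma fst_zip_sublist {α β : Type*} :
    ∀ (l1 : List α) (l2 : List β), (((l1.zip l2).map Prod.fst)).Sublist l1
  | [], _ => by simp
  | _ :: _, [] => by simp
  | a :: t1, b :: t2 => by
    simp only [List.zip_cons_cons, List.map_cons]
    exact (fst_zip_sublist t1 t2).cons₂ a

lemma snd_zip_sublist {α β : Type*} :
    ∀ (l1 : List α) (l2 : List β), (((l1.zip l2).map Prod.snd)).Sublist l2
  | [], _ => by simp
  | _ :: _, [] => by simp
  | a :: t1, b :: t2 => by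
    simp only [List.zip_cons_cons, List.map_cons]
    exact (snd_zip_sublist t1 t2).cons₂ b

lemma aux {E1 E2 V : Type*} [Fintype E1] [Fintype E2] [Fintype V]
    (C1 : Finset (Finset E1)) (C2 : Finset (Finset E2))
    (i : E1 → V) (j : E2 → V) (hi : Function.Injective i) (hj : Function.Injective j)
    (hd : ∀ a b, i a ≠ j b)
    (hall : ∀ v : V, (∃ a, i a = v) ∨ (∃ b, j b = v))
    (w : V → ℕ) (x1 : E1 → ℕ) (y1 : Finset E1 → ℕ) (y2 : Finset E2 → ℕ)
    (hc1 : IsCover C1 x1)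
    (hp1 : IsPacking C1 (fun e => w (i e)) y1)
    (hp2 : IsPacking C2 (fun e => w (j e)) y2)
    (hv1 : ∑ e, w (i e) * x1 e = ∑ A ∈ C1, y1 A)
    (hle : ∑ A ∈ C1, y1 A ≤ ∑ B ∈ C2, y2 B)
    (C : Finset (Finset V))
    (hC : ∀ S, S ∈ C ↔ ∃ p, p ∈ C1 ×ˢ C2 ∧ p.1.image i ∪ p.2.image j = S) :
    ∃ x y, IsCover C x ∧ IsPacking C w y ∧
      (∑ v, w v * x v) = ∑ S ∈ C, y S := by
  classical
  set f : Finset E1 × Finset E2 → Finset V := fun p => p.1.image i ∪ p.2.image j with hf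
  set M1 : Multiset (Finset E1) := ∑ A ∈ C1, Multiset.replicate (y1 A) A with hM1
  set M2 : Multiset (Finset E2) := ∑ B ∈ C2, Multiset.replicate (y2 B) B with hM2
  set L1 : List (Finset E1) := M1.toList with hL1
  set L2 : List (Finset E2) := M2.toList with hL2
  set P : List (Finset E1 × Finset E2) := L1.zip L2 with hP
  set Q : Multiset (Finset V) := ((P.map f : List (Finset V)) : Multiset (Finset V)) with hQ
  -- membership facts
  have hmemM1 : ∀ A ∈ M1, A ∈ C1 := by
    intro A hA
    obtain ⟨B, hB, hAB⟩ := Multiset.mem_sum.1 hA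
    rwa [Multiset.eq_of_mem_replicate hAB]
  have hmemM2 : ∀ B ∈ M2, B ∈ C2 := by
    intro B hB
    obtain ⟨B', hB', hBB⟩ := Multiset.mem_sum.1 hB
    rwa [Multiset.eq_of_mem_replicate hBB]
  have hQmem : ∀ S ∈ Q, S ∈ C := by
    intro S hS
    rw [hQ, Multiset.mem_coe] at hS
    obtain ⟨p, hp, rfl⟩ := List.mem_map.1 hS
    obtain ⟨h1', h2'⟩ := List.of_mem_zip (a := p.1) (b := p.2) hp
    refine (hC _).2 ⟨p, Finset.mem_product.2 ⟨?_, ?_⟩, rfl⟩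
    · exact hmemM1 _ (Multiset.mem_toList.1 h1')
    · exact hmemM2 _ (Multiset.mem_toList.1 h2')
  have hlenL1 : L1.length = ∑ A ∈ C1, y1 A := by
    rw [hL1, Multiset.length_toList, hM1, card_repsum]
  have hlenL2 : L2.length = ∑ B ∈ C2, y2 B := by
    rw [hL2, Multiset.length_toList, hM2, card_repsum]
  have hlenP : P.length = ∑ A ∈ C1, y1 A := by
    rw [hP, List.length_zip, hlenL1, hlenL2, min_eq_left hle]
  -- count transfer
  have key : ∀ (pr : Finset V → Prop) (_ : DecidablePred pr),
      Multiset.countP pr Q = Multiset.countP (fun p => pr (f p)) (↑P : Multiset _) := by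
    intro pr _
    rw [hQ, ← Multiset.map_coe, Multiset.countP_map, Multiset.countP_eq_card_filter]
  refine ⟨fun v => ∑ e ∈ Finset.univ.filter fun e => i e = v, x1 e, fun S => Q.count S,
    ?_, ?_, ?_⟩
  · -- cover
    intro S hS
    obtain ⟨p, hp, rfl⟩ := (hC S).1 hS
    calc 1 ≤ ∑ a ∈ p.1, x1 a := hc1 p.1 (Finset.mem_product.1 hp).1
    _ ≤ ∑ a ∈ p.1, ∑ e ∈ Finset.univ.filter fun e => i e = i a, x1 e :=
        Finset.sum_le_sum fun a _ =>
          Finset.single_le_sum (f := x1) (fun _ _ => Nat.zero_le _) (by simp)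
    _ = ∑ s ∈ p.1.image i, ∑ e ∈ Finset.univ.filter fun e => i e = s, x1 e := by
        rw [Finset.sum_image fun a _ b _ h => hi h]
    _ ≤ ∑ s ∈ f p, ∑ e ∈ Finset.univ.filter fun e => i e = s, x1 e :=
        Finset.sum_le_sum_of_subset Finset.subset_union_left
  · -- packing
    intro v
    have step1 : (∑ S ∈ C.filter fun S => v ∈ S, Q.count S)
        = Multiset.countP (fun S => v ∈ S) Q := by
      rw [sum_count_eq, Multiset.countP_eq_card_filter]
      congr 1
      refine Multiset.filter_congr fun S hS => ?_
      simp [Finset.mem_filter, hQmem S hS]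
    have step2 : Multiset.countP (fun S => v ∈ S) Q
        = Multiset.countP (fun p => v ∈ f p) (↑P : Multiset _) := key _ inferInstance
    refine le_trans (le_of_eq (step1.trans step2)) ?_
    rcases hall v with ⟨u, rfl⟩ | ⟨u, rfl⟩
    · have heq : Multiset.countP (fun p => i u ∈ f p) (↑P : Multiset _)
          = Multiset.countP (fun p => u ∈ p.1) (↑P : Multiset (Finset E1 × Finset E2)) := by
        refine Multiset.countP_congr rfl fun p _ => ?_
        simp only [hf, Finset.mem_union, Finset.mem_image]
        apply propext
        constructor
        · rintro (⟨a, ha, hia⟩ | ⟨b, hb, hjb⟩)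
          · rwa [← hi hia]
          · exact absurd hjb.symm (hd u b)
        · intro h; exact Or.inl ⟨u, h, rfl⟩
      have h1 : Multiset.countP (fun p => i u ∈ f p) (↑P : Multiset _)
          = Multiset.countP (fun A => u ∈ A) (↑(P.map Prod.fst) : Multiset (Finset E1)) := by
        rw [heq, ← Multiset.map_coe, Multiset.countP_map, Multiset.countP_eq_card_filter]
      have h2 : Multiset.countP (fun A => u ∈ A) (↑(P.map Prod.fst) : Multiset (Finset E1))
          ≤ Multiset.countP (fun A => u ∈ A) M1 := by
        have h3 : (↑(P.map Prod.fst) : Multiset (Finset E1)) ≤ (M1 : Multiset _) := by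
          rw [← Multiset.coe_toList M1, ← hL1]
          exact (fst_zip_sublist L1 L2).subperm
        exact Multiset.countP_le_of_le _ h3
      refine le_trans (le_of_eq h1) (le_trans h2 (le_trans (le_of_eq ?_) (hp1 u)))
      exact countP_repsum C1 id y1 _
    · have heq : Multiset.countP (fun p => j u ∈ f p) (↑P : Multiset _)
          = Multiset.countP (fun p => u ∈ p.2) (↑P : Multiset (Finset E1 × Finset E2)) := by
        refine Multiset.countP_congr rfl fun p _ => ?_
        simp only [hf, Finset.mem_union, Finset.mem_image]
        apply propext
        constructor
        · rintro (⟨a, ha, hia⟩ | ⟨b, hb, hjb⟩)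
          · exact absurd hia (hd a u)
          · rwa [← hj hjb]
        · intro h; exact Or.inr ⟨u, h, rfl⟩
      have h1 : Multiset.countP (fun p => j u ∈ f p) (↑P : Multiset _)
          = Multiset.countP (fun B => u ∈ B) (↑(P.map Prod.snd) : Multiset (Finset E2)) := by
        rw [heq, ← Multiset.map_coe, Multiset.countP_map, Multiset.countP_eq_card_filter]
      have h2 : Multiset.countP (fun B => u ∈ B) (↑(P.map Prod.snd) : Multiset (Finset E2))
          ≤ Multiset.countP (fun B => u ∈ B) M2 := by
        have h3 : (↑(P.map Prod.snd) : Multiset (Finset E2)) ≤ (M2 : Multiset _) := by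
          rw [← Multiset.coe_toList M2, ← hL2]
          exact (snd_zip_sublist L1 L2).subperm
        exact Multiset.countP_le_of_le _ h3
      refine le_trans (le_of_eq h1) (le_trans h2 (le_trans (le_of_eq ?_) (hp2 u)))
      exact countP_repsum C2 id y2 _
  · -- value
    have lhs : (∑ v, w v * ∑ e ∈ Finset.univ.filter fun e => i e = v, x1 e)
        = ∑ e, w (i e) * x1 e := by
      rw [← Finset.sum_fiberwise Finset.univ i fun e => w (i e) * x1 e]
      refine Finset.sum_congr rfl fun v _ => ?_
      rw [Finset.mul_sum]
      refine Finset.sum_congr rfl fun e he => ?_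
      rw [(Finset.mem_filter.1 he).2]
    have rhs : (∑ S ∈ C, Q.count S) = ∑ A ∈ C1, y1 A := by
      rw [sum_count_eq, Multiset.filter_eq_self.2 hQmem, hQ, Multiset.coe_card,
        List.length_map, hlenP]
    rw [lhs, hv1, rhs]

end MFMCAux

/-- the product of two clutters with the max-flow min-cut property has
the max-flow min-cut property. -/
theorem stmt2 {E1 E2 : Type*} [Fintype E1] [Fintype E2]
    (C1 : Finset (Finset E1)) (C2 : Finset (Finset E2))
    (h1 : IsClutter C1) (h2 : IsClutter C2)
    (hm1 : HasMFMC C1) (hm2 : HasMFMC C2) :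
    HasMFMC (prodCl C1 C2) := by
  classical
  intro w
  obtain ⟨x1, y1, hc1, hp1, hv1⟩ := hm1 fun e => w (Sum.inl e)
  obtain ⟨x2, y2, hc2, hp2, hv2⟩ := hm2 fun e => w (Sum.inr e)
  by_cases hle : ∑ A ∈ C1, y1 A ≤ ∑ B ∈ C2, y2 B
  · exact MFMCAux.aux C1 C2 Sum.inl Sum.inr Sum.inl_injective Sum.inr_injective
      (fun a b => Sum.inl_ne_inr)
      (fun v => by cases v with
        | inl a => exact Or.inl ⟨a, rfl⟩
        | inr b => exact Or.inr ⟨b, rfl⟩)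
      w x1 y1 y2 hc1 hp1 hp2 hv1 hle (prodCl C1 C2)
      (fun S => by
        simp only [prodCl, Finset.mem_image, Finset.mem_product, Prod.exists]
        constructor
        · rintro ⟨A, B, h, rfl⟩
          exact ⟨A, B, h, Finset.ext fun s => by simp⟩
        · rintro ⟨A, B, h, rfl⟩
          exact ⟨A, B, h, Finset.ext fun s => by simp⟩)
  · push_neg at hle
    exact MFMCAux.aux C2 C1 Sum.inr Sum.inl Sum.inr_injective Sum.inl_injective
      (fun a b => Sum.inr_ne_inl)
      (fun v => by cases v with
        | inl a => exact Or.inr ⟨a, rfl⟩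
        | inr b => exact Or.inl ⟨b, rfl⟩)
      w x2 y2 y1 hc2 hp2 hp1 hv2 hle.le (prodCl C1 C2)
      (fun S => by
        simp only [prodCl, Finset.mem_image, Finset.mem_product, Prod.exists]
        constructor
        · rintro ⟨A, B, ⟨hA, hB⟩, rfl⟩
          exact ⟨B, A, ⟨hB, hA⟩, Finset.ext fun s => by simp [or_comm]⟩
        · rintro ⟨B, A, ⟨hB, hA⟩, rfl⟩
          exact ⟨A, B, ⟨hA, hB⟩, Finset.ext fun s => by simp [or_comm]⟩)
end
end

section
/- Let S be a subset of V1 x ... x Vn for nonempty finite pairwise disjoint sets Vi, and let S' be obtained from S either by dropping a set J of coordinates (projection) or by restricting S to a product U1 x ... x Un with Ui subseteq Vi nonempty and then dropping the coordinates on which all points of the restriction agree. Then mult(S') is a minor of mult(S). -/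
open scoped Classical
noncomputable section

/-- `C` has (a clutter isomorphic to) `D` as a minor: some minor of `C` is the image of
`D` under an injection of ground sets. -/
def HasMinorIso {V W : Type*} (C : Finset (Finset V)) (D : Finset (Finset W)) : Prop :=
  ∃ (I J : Finset V) (φ : W → V), Disjoint I J ∧ Function.Injective φ ∧
    minorCl C I J = D.image fun A => A.image φ

/-- The multipartite uniform clutter of `S ⊆ ∏ i, W i`. -/
def multCl {ι : Type*} [Fintype ι] {W : ι → Type*} (S : Finset (∀ i, W i)) :
    Finset (Finset (Σ i, W i)) :=
  S.image fun x => Finset.univ.image fun i => (⟨i, x i⟩ : Σ i, W i)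

/-- The set system obtained from `S` by dropping the coordinates in `J`. -/
def dropCoords {ι : Type*} [Fintype ι] {W : ι → Type*} (S : Finset (∀ i, W i))
    (J : Finset ι) : Finset (∀ i : {i : ι // i ∉ J}, W i.1) :=
  S.image fun x => fun i => x i.1

lemma minimalSets_eq_self {V : Type*} (F : Finset (Finset V))
    (h : ∀ A ∈ F, ∀ B ∈ F, B ⊆ A → B = A) : minimalSets F = F := by
  ext A
  simp only [minimalSets, Finset.mem_filter, and_iff_left_iff_imp]
  exact fun hA => h A hA

def sigEmb {ι : Type*} {W : ι → Type*} (J0 : Finset ι)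
    (p : Σ i : {i : ι // i ∉ J0}, W i.1) : Σ i, W i := ⟨p.1.1, p.2⟩

lemma sigEmb_inj {ι : Type*} {W : ι → Type*} (J0 : Finset ι) :
    Function.Injective (sigEmb (W := W) J0) := by
  intro a b h
  obtain ⟨h1, h2⟩ := Sigma.ext_iff.mp h
  exact Sigma.ext (Subtype.ext h1) h2

lemma key {ι : Type*} [Fintype ι] {W : ι → Type*} [∀ i, Fintype (W i)]
    (S : Finset (∀ i, W i)) (U : ∀ i, Finset (W i)) (J0 : Finset ι) :
    HasMinorIso (multCl S)
      (multCl (dropCoords (S.filter fun x => ∀ i, x i ∈ U i) J0)) := by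
  set I : Finset (Σ i, W i) := Finset.univ.filter fun p => p.2 ∉ U p.1 with hI
  set J' : Finset (Σ i, W i) := Finset.univ.filter fun p => p.1 ∈ J0 ∧ p.2 ∈ U p.1 with hJ'
  have hdisj : Disjoint I J' := by
    rw [Finset.disjoint_left]
    intro p hp hq
    simp only [hI, hJ', Finset.mem_filter, Finset.mem_univ, true_and] at hp hq
    exact hp hq.2
  -- instance-agnostic helpers
  have hUof : ∀ x : ∀ i, W i, (∀ i : ι, (⟨i, x i⟩ : Σ i, W i) ∈ I → False) →
      ∀ i, x i ∈ U i := by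
    intro x h i
    by_contra hui
    refine h i ?_
    simp only [hI, Finset.mem_filter, Finset.mem_univ, true_and]
    exact hui
  have hmem' : ∀ x : ∀ i, W i, (∀ i, x i ∈ U i) → ∀ p : Σ i, W i,
      (((∃ i, (⟨i, x i⟩ : Σ i, W i) = p) ∧ p ∉ J') ↔ ∃ i, i ∉ J0 ∧ p = ⟨i, x i⟩) := by
    intro x hU p
    simp only [hJ', Finset.mem_filter, Finset.mem_univ, true_and, not_and]
    constructor
    · rintro ⟨⟨i, rfl⟩, hp⟩
      exact ⟨i, fun hiJ => hp hiJ (hU i), rfl⟩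
    · rintro ⟨i, hi, rfl⟩
      exact ⟨⟨i, rfl⟩, fun h => absurd h hi⟩
  have hcard : ∀ (x : ∀ i, W i) (A : Finset (Σ i, W i)),
      (∀ p : Σ i, W i, p ∈ A ↔ ∃ i, i ∉ J0 ∧ p = ⟨i, x i⟩) → A.card = J0ᶜ.card := by
    intro x A h
    have hA : A = J0ᶜ.image fun i => (⟨i, x i⟩ : Σ i, W i) := by
      ext p
      rw [h p]
      simp only [Finset.mem_image, Finset.mem_compl]
      constructor
      · rintro ⟨i, hi, rfl⟩; exact ⟨i, hi, rfl⟩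
      · rintro ⟨i, hi, rfl⟩; exact ⟨i, hi, rfl⟩
    rw [hA]
    exact Finset.card_image_of_injective _ (fun i j hij => congrArg Sigma.fst hij)
  refine ⟨I, J', sigEmb J0, hdisj, sigEmb_inj J0, ?_⟩
  rw [minorCl, minimalSets_eq_self]
  · -- main equality
    ext B
    simp only [Finset.mem_image, Finset.mem_filter, multCl, dropCoords]
    constructor
    · rintro ⟨C, ⟨⟨x, hx, rfl⟩, hCI⟩, rfl⟩
      have hU : ∀ i, x i ∈ U i := hUof x (by
        intro i hin
        rw [Finset.eq_empty_iff_forall_notMem] at hCI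
        exact hCI ⟨i, x i⟩ (by
          simp only [Finset.mem_inter, Finset.mem_image, Finset.mem_univ, true_and]
          exact ⟨⟨i, rfl⟩, hin⟩))
      refine ⟨_, ⟨fun i : {i : ι // i ∉ J0} => x i.1, ⟨x, ⟨hx, hU⟩, rfl⟩, rfl⟩, ?_⟩
      refine (Finset.ext fun p => ?_).symm
      simp only [Finset.mem_sdiff, Finset.mem_image, Finset.mem_univ, true_and]
      rw [hmem' x hU p]
      constructor
      · rintro ⟨i, hi, rfl⟩
        exact ⟨⟨⟨i, hi⟩, x i⟩, ⟨⟨i, hi⟩, rfl⟩, rfl⟩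
      · rintro ⟨q, ⟨i, rfl⟩, rfl⟩
        exact ⟨i.1, i.2, rfl⟩
    · rintro ⟨B', ⟨y, ⟨x, ⟨hx, hU⟩, rfl⟩, rfl⟩, rfl⟩
      refine ⟨_, ⟨⟨x, hx, rfl⟩, ?_⟩, ?_⟩
      · rw [Finset.eq_empty_iff_forall_notMem]
        intro p hp
        simp only [Finset.mem_inter, Finset.mem_image, Finset.mem_univ, true_and] at hp
        obtain ⟨⟨i, rfl⟩, hpI⟩ := hp
        simp only [hI, Finset.mem_filter, Finset.mem_univ, true_and] at hpI
        exact hpI (hU i)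
      · refine Finset.ext fun p => ?_
        simp only [Finset.mem_sdiff, Finset.mem_image, Finset.mem_univ, true_and]
        rw [hmem' x hU p]
        constructor
        · rintro ⟨i, hi, rfl⟩
          exact ⟨⟨⟨i, hi⟩, x i⟩, ⟨⟨i, hi⟩, rfl⟩, rfl⟩
        · rintro ⟨q, ⟨i, rfl⟩, rfl⟩
          exact ⟨i.1, i.2, rfl⟩
  · -- minimality
    intro A hA B hB hBA
    simp only [Finset.mem_image, Finset.mem_filter, multCl] at hA hB
    obtain ⟨C, ⟨⟨x, hx, rfl⟩, hCI⟩, rfl⟩ := hA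
    obtain ⟨D, ⟨⟨y, hy, rfl⟩, hDI⟩, rfl⟩ := hB
    have hUx : ∀ i, x i ∈ U i := hUof x (by
      intro i hin
      rw [Finset.eq_empty_iff_forall_notMem] at hCI
      exact hCI ⟨i, x i⟩ (by
        simp only [Finset.mem_inter, Finset.mem_image, Finset.mem_univ, true_and]
        exact ⟨⟨i, rfl⟩, hin⟩))
    have hUy : ∀ i, y i ∈ U i := hUof y (by
      intro i hin
      rw [Finset.eq_empty_iff_forall_notMem] at hDI
      exact hDI ⟨i, y i⟩ (by
        simp only [Finset.mem_inter, Finset.mem_image, Finset.mem_univ, true_and]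
        exact ⟨⟨i, rfl⟩, hin⟩))
    refine Finset.eq_of_subset_of_card_le hBA (le_of_eq (Eq.trans (hcard x _ ?_)
      (hcard y _ ?_).symm))
    · intro p
      simp only [Finset.mem_sdiff, Finset.mem_image, Finset.mem_univ, true_and]
      exact hmem' x hUx p
    · intro p
      simp only [Finset.mem_sdiff, Finset.mem_image, Finset.mem_univ, true_and]
      exact hmem' y hUy p

/-- if `S'` is a projection of `S` (obtained by dropping a set `J` of
coordinates), or a restriction of `S` (obtained by restricting to `∏ i, U i` with each
`U i` nonempty and then dropping the coordinates on which all remaining points agree),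
then `mult S'` is a minor of `mult S`. -/
theorem stmt4 {ι : Type*} [Fintype ι] {W : ι → Type*} [∀ i, Fintype (W i)]
    [∀ i, Nonempty (W i)] (S : Finset (∀ i, W i)) :
    (∀ J : Finset ι, HasMinorIso (multCl S) (multCl (dropCoords S J))) ∧
    (∀ U : ∀ i, Finset (W i), (∀ i, (U i).Nonempty) →
      HasMinorIso (multCl S)
        (multCl (dropCoords (S.filter fun x => ∀ i, x i ∈ U i)
          (Finset.univ.filter fun i : ι =>
            ∀ x ∈ S.filter (fun x => ∀ i, x i ∈ U i),
              ∀ y ∈ S.filter (fun x => ∀ i, x i ∈ U i), x i = y i)))) := by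
  constructor
  · intro J
    have h := key S (fun _ => Finset.univ) J
    simpa only [Finset.mem_univ, implies_true, Finset.filter_true] using h
  · intro U _
    exact key S U _
end
end

section
/- A multipartite uniform clutter C with parts V1,...,Vn is ideal if and only if all of its localizations are ideal, where a localization is any minor obtained from C by contracting exactly one element from each part Vi. -/
open scoped Classical
noncomputable section

namespace Stmt5Aux

lemma exists_minimal_subset {V : Type*} (F : Finset (Finset V)) :
    ∀ S, S ∈ F → ∃ B ∈ minimalSets F, B ⊆ S := by
  intro S
  induction S using Finset.strongInductionOn with
  | _ S ih =>
    intro hS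
    by_cases h : ∀ B ∈ F, B ⊆ S → B = S
    · exact ⟨S, Finset.mem_filter.2 ⟨hS, h⟩, subset_rfl⟩
    · push_neg at h
      obtain ⟨B, hBF, hBS, hBne⟩ := h
      obtain ⟨B', hB', hB'B⟩ := ih B (ssubset_of_subset_of_ne hBS hBne) hBF
      exact ⟨B', hB', hB'B.trans hBS⟩

lemma mem_minor {V : Type*} {C : Finset (Finset V)} {J : Finset V} {B : Finset V}
    (hB : B ∈ minorCl C ∅ J) : ∃ A ∈ C, B = A \ J := by
  have := (Finset.mem_filter.1 hB).1
  obtain ⟨A, hA, rfl⟩ := Finset.mem_image.1 this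
  exact ⟨A, (Finset.mem_filter.1 hA).1, rfl⟩

lemma minor_lower {V : Type*} {C : Finset (Finset V)} {J : Finset V} {A : Finset V}
    (hA : A ∈ C) : ∃ B ∈ minorCl C ∅ J, B ⊆ A \ J := by
  apply exists_minimal_subset
  exact Finset.mem_image.2 ⟨A, Finset.mem_filter.2 ⟨hA, Finset.inter_empty A⟩, rfl⟩

lemma extreme_no_slack {V : Type*} (C : Finset (Finset V)) (x : V → ℝ)
    (hx : IsExtremePt C x) (v : V) (hv : 0 < x v)
    (hs : ∀ A ∈ C, v ∈ A → 1 < ∑ w ∈ A, x w) : False := by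
  classical
  set T := C.filter (fun A => v ∈ A) with hT
  set S : Finset ℝ := insert (x v) (T.image fun A => (∑ w ∈ A, x w) - 1) with hSdef
  have hSne : S.Nonempty := ⟨x v, Finset.mem_insert_self _ _⟩
  set ε := S.min' hSne with hε
  have hεpos : 0 < ε := by
    have hmem := S.min'_mem hSne
    rw [← hε] at hmem
    rcases Finset.mem_insert.1 hmem with h | h
    · rw [h]; exact hv
    · obtain ⟨A, hA, hAe⟩ := Finset.mem_image.1 h
      have hAC := (Finset.mem_filter.1 hA).1
      have hvA := (Finset.mem_filter.1 hA).2
      rw [← hAe]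
      linarith [hs A hAC hvA]
  have hεv : ε ≤ x v := S.min'_le _ (Finset.mem_insert_self _ _)
  have hεA : ∀ A ∈ C, v ∈ A → ε ≤ (∑ w ∈ A, x w) - 1 := by
    intro A hA hvA
    exact S.min'_le _ (Finset.mem_insert.2 (Or.inr (Finset.mem_image.2
      ⟨A, Finset.mem_filter.2 ⟨hA, hvA⟩, rfl⟩)))
  set y : V → ℝ := fun w => x w + if w = v then ε else 0 with hy
  set z : V → ℝ := fun w => x w - if w = v then ε else 0 with hz
  have hsum : ∀ A : Finset V, ∑ w ∈ A, (if w = v then ε else 0) = if v ∈ A then ε else 0 :=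
    fun A => Finset.sum_ite_eq' A v (fun _ => ε)
  have hyQ : MemQ C y := by
    constructor
    · intro w; simp only [hy]
      split <;> [linarith [hx.1.1 w]; simpa using hx.1.1 w]
    · intro A hA
      simp only [hy, Finset.sum_add_distrib, hsum]
      split <;> [linarith [hx.1.2 A hA]; linarith [hx.1.2 A hA]]
  have hzQ : MemQ C z := by
    constructor
    · intro w; simp only [hz]
      split
      · next h => subst h; linarith
      · simpa using hx.1.1 w
    · intro A hA
      simp only [hz, Finset.sum_sub_distrib, hsum]
      split
      · next h => linarith [hεA A hA h]
      · simpa using hx.1.2 A hA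
  have := hx.2 y z hyQ hzQ (by funext w; simp only [hy, hz]; ring)
  have := congrFun this v
  simp only [hy, hz, if_pos rfl, if_true, eq_self_iff_true] at this
  linarith

lemma sum_parts {n : ℕ} {W : Fin n → Type*} (A : Finset (Σ i, W i)) (f : (Σ i, W i) → ℝ) :
    ∑ e ∈ A, f e = ∑ i : Fin n, ∑ e ∈ A.filter (fun e => e.1 = i), f e :=
  (Finset.sum_fiberwise_of_maps_to (fun e _ => Finset.mem_univ e.1) f).symm

lemma part_rep {n : ℕ} {W : Fin n → Type*} {A : Finset (Σ i, W i)}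
    (hA : ∀ i : Fin n, (A.filter fun e => e.1 = i).card = 1) (i : Fin n) :
    ∃ e : Σ i, W i, e ∈ A ∧ e.1 = i ∧ A.filter (fun e => e.1 = i) = {e} := by
  obtain ⟨e, he⟩ := Finset.card_eq_one.mp (hA i)
  have heA : e ∈ A.filter (fun e => e.1 = i) := he ▸ Finset.mem_singleton_self e
  rw [Finset.mem_filter] at heA
  exact ⟨e, heA.1, heA.2, he⟩


lemma sum_split {V : Type*} (A J : Finset V) (f : V → ℝ) :
    ∑ e ∈ A ∩ J, f e + ∑ e ∈ A \ J, f e = ∑ e ∈ A, f e :=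
  Finset.sum_inter_add_sum_sdiff A J f

lemma sdiff_subset' {V : Type*} (A J : Finset V) : A \ J ⊆ A :=
  Finset.sdiff_subset


lemma sum_sdiff_ge {V : Type*} {A J : Finset V} {f : V → ℝ}
    (hf : ∀ j ∈ J, f j = 0) (h : 1 ≤ ∑ e ∈ A, f e) : 1 ≤ ∑ e ∈ A \ J, f e := by
  have hsplit := sum_split A J f
  have hzero : ∑ e ∈ A ∩ J, f e = 0 :=
    Finset.sum_eq_zero fun e he => hf e (Finset.mem_inter.1 he).2
  linarith

lemma not_mem_sdiff {V : Type*} {J A : Finset V} {j : V} (hj : j ∈ J) (h : j ∈ A \ J) :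
    False := (Finset.mem_sdiff.1 h).2 hj

end Stmt5Aux

/-- a multipartite uniform clutter (a clutter over the disjoint union of
nonempty parts `W 1, …, W n` each of whose members meets each part exactly once) is ideal
if and only if all of its localizations are ideal, a localization being the minor obtained
by contracting exactly one element `α i` from each part. -/
theorem stmt5 {n : ℕ} {W : Fin n → Type*} [∀ i, Fintype (W i)] [∀ i, Nonempty (W i)]
    (C : Finset (Finset (Σ i, W i)))
    (hmulti : ∀ A ∈ C, ∀ i : Fin n, (A.filter fun e => e.1 = i).card = 1) :
    IdealClutter C ↔
      ∀ α : ∀ i, W i,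
        IdealClutter (minorCl C ∅
          (Finset.univ.image fun i => (⟨i, α i⟩ : Σ i, W i))) := by
  constructor
  · -- forward: idealness passes to contractions
    intro hC α z hz v
    set J : Finset (Σ i, W i) := Finset.univ.image fun i => (⟨i, α i⟩ : Σ i, W i) with hJ
    have hz0 : ∀ u, 0 ≤ z u := hz.1.1
    have hzJ : ∀ j ∈ J, z j = 0 := by
      intro j hj
      by_contra h
      refine Stmt5Aux.extreme_no_slack _ z hz j (lt_of_le_of_ne (hz0 j) (Ne.symm h)) ?_
      intro B hB hjB
      obtain ⟨A, hA, rfl⟩ := Stmt5Aux.mem_minor hB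
      exact absurd (Stmt5Aux.not_mem_sdiff hj hjB) not_false
    have hzQC : MemQ C z := by
      refine ⟨hz0, fun A hA => ?_⟩
      obtain ⟨B, hB, hBsub⟩ := Stmt5Aux.minor_lower (J := J) hA
      calc (1:ℝ) ≤ ∑ e ∈ B, z e := hz.1.2 B hB
        _ ≤ ∑ e ∈ A, z e := Finset.sum_le_sum_of_subset_of_nonneg
            (hBsub.trans (Stmt5Aux.sdiff_subset' A J)) (fun e _ _ => hz0 e)
    have hzext : IsExtremePt C z := by
      refine ⟨hzQC, fun y w hy hw hmid => ?_⟩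
      have hyJ : ∀ j ∈ J, y j = 0 ∧ w j = 0 := by
        intro j hj
        have h0 := hzJ j hj
        have h2 : z j = (y j + w j) / 2 := congrFun hmid j
        constructor <;> linarith [hy.1 j, hw.1 j]
      have key : ∀ y : (Σ i, W i) → ℝ, MemQ C y → (∀ j ∈ J, y j = 0) →
          MemQ (minorCl C ∅ J) y := by
        intro y hy hyJ'
        refine ⟨hy.1, fun B hB => ?_⟩
        obtain ⟨A, hA, rfl⟩ := Stmt5Aux.mem_minor hB
        exact Stmt5Aux.sum_sdiff_ge hyJ' (hy.2 A hA)
      exact hz.2 y w (key y hy fun j hj => (hyJ j hj).1) (key w hw fun j hj => (hyJ j hj).2) hmid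
    exact hC z hzext v
  · -- backward
    intro hloc x hx v
    have hx0 : ∀ u, 0 ≤ x u := hx.1.1
    have hmin : ∀ i : Fin n, ∃ a : W i, ∀ b : W i, x ⟨i, a⟩ ≤ x ⟨i, b⟩ := by
      intro i
      obtain ⟨a, -, ha⟩ := Finset.exists_min_image (Finset.univ : Finset (W i))
        (fun w => x ⟨i, w⟩) ⟨Classical.arbitrary _, Finset.mem_univ _⟩
      exact ⟨a, fun b => ha b (Finset.mem_univ b)⟩
    choose α hα using hmin
    by_cases hallzero : ∀ i, x ⟨i, α i⟩ = 0
    · -- all minima are 0 : x is an extreme point of the localization at α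
      set J : Finset (Σ i, W i) := Finset.univ.image fun i => (⟨i, α i⟩ : Σ i, W i) with hJ
      have hxJ : ∀ j ∈ J, x j = 0 := by
        intro j hj
        obtain ⟨i, -, rfl⟩ := Finset.mem_image.1 hj
        exact hallzero i
      have hxQM : MemQ (minorCl C ∅ J) x := by
        refine ⟨hx0, fun B hB => ?_⟩
        obtain ⟨A, hA, rfl⟩ := Stmt5Aux.mem_minor hB
        exact Stmt5Aux.sum_sdiff_ge hxJ (hx.1.2 A hA)
      have hxM : IsExtremePt (minorCl C ∅ J) x := by
        refine ⟨hxQM, fun y w hy hw hmid => ?_⟩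
        have key : ∀ y : (Σ i, W i) → ℝ, MemQ (minorCl C ∅ J) y → MemQ C y := by
          intro y hy'
          refine ⟨hy'.1, fun A hA => ?_⟩
          obtain ⟨B, hB, hBsub⟩ := Stmt5Aux.minor_lower (J := J) hA
          calc (1:ℝ) ≤ ∑ e ∈ B, y e := hy'.2 B hB
            _ ≤ ∑ e ∈ A, y e := Finset.sum_le_sum_of_subset_of_nonneg
                (hBsub.trans (Stmt5Aux.sdiff_subset' A J)) (fun e _ _ => hy'.1 e)
        exact hx.2 y w (key y hy) (key w hw) hmid
      exact hloc α x hxM v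
    · push_neg at hallzero
      obtain ⟨i0, hi0⟩ := hallzero
      have hμpos : 0 < x ⟨i0, α i0⟩ := lt_of_le_of_ne (hx0 _) (Ne.symm hi0)
      -- Step 1: there is a tight constraint through ⟨i0, α i0⟩, hence the minimum is ≤ 1
      have hex : ∃ A, A ∈ C ∧ (⟨i0, α i0⟩ : Σ j, W j) ∈ A ∧ ∑ e ∈ A, x e ≤ 1 := by
        by_contra h
        push_neg at h
        exact Stmt5Aux.extreme_no_slack C x hx _ hμpos fun A hA hmem => h A hA hmem
      obtain ⟨A0, hA0, hmemA0, htight⟩ := hex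
      have hμle1 : x ⟨i0, α i0⟩ ≤ 1 :=
        le_trans (Finset.single_le_sum (fun e _ => hx0 e) hmemA0) htight
      rcases lt_or_eq_of_le hμle1 with hlt | heq1
      · -- 0 < μ < 1 : impossible, x is a proper convex combination
        exfalso
        set μ := x ⟨i0, α i0⟩ with hμ
        have hden : 0 < 1 - μ := by linarith
        set u : (Σ j, W j) → ℝ := fun e => if e.1 = i0 then 1 else 0 with hu
        have husum : ∀ A ∈ C, ∑ e ∈ A, u e = 1 := by
          intro A hA
          rw [Stmt5Aux.sum_parts]
          have h1 : ∀ j : Fin n, ∑ e ∈ A.filter (fun e => e.1 = j), u e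
              = if j = i0 then (1:ℝ) else 0 := by
            intro j
            obtain ⟨e, heA, he1, hfil⟩ := Stmt5Aux.part_rep (hmulti A hA) j
            rw [hfil, Finset.sum_singleton, hu]
            simp only [he1]
          rw [Finset.sum_congr rfl fun j _ => h1 j]
          simp only [Finset.sum_ite_eq', Finset.mem_univ, if_true]
        set zt : (Σ j, W j) → ℝ := fun e => (x e - μ * u e) / (1 - μ) with hzt
        have hzt0 : ∀ e, 0 ≤ zt e := by
          rintro ⟨j, b⟩
          simp only [hzt, hu]
          by_cases hj : j = i0
          · subst hj
            rw [if_pos rfl, mul_one]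
            have h2 : μ ≤ x ⟨j, b⟩ := hα j b
            exact div_nonneg (by linarith) hden.le
          · rw [if_neg hj, mul_zero, sub_zero]
            exact div_nonneg (hx0 _) hden.le
        have hztsum : ∀ A ∈ C, 1 ≤ ∑ e ∈ A, zt e := by
          intro A hA
          have hsum : ∑ e ∈ A, zt e = ((∑ e ∈ A, x e) - μ * ∑ e ∈ A, u e) / (1 - μ) := by
            simp only [hzt]
            rw [← Finset.sum_div]
            congr 1
            rw [Finset.sum_sub_distrib, Finset.mul_sum]
          rw [hsum, husum A hA, mul_one, le_div_iff₀ hden]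
          linarith [hx.1.2 A hA]
        set t := min μ (1 - μ) with htdef
        have htpos : 0 < t := lt_min hμpos hden
        have ht1 : t ≤ μ := min_le_left _ _
        have ht2 : t ≤ 1 - μ := min_le_right _ _
        have hxcomb : ∀ e, x e = μ * u e + (1 - μ) * zt e := by
          intro e; simp only [hzt]; field_simp; ring
        set y := fun e => x e + t * (u e - zt e) with hy
        set w := fun e => x e - t * (u e - zt e) with hw
        have hycoef : ∀ e, y e = (μ + t) * u e + (1 - μ - t) * zt e := by
          intro e; simp only [hy]; rw [hxcomb e]; ring
        have hwcoef : ∀ e, w e = (μ - t) * u e + (1 - μ + t) * zt e := by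
          intro e; simp only [hw]; rw [hxcomb e]; ring
        have hu0 : ∀ e, 0 ≤ u e := by
          intro e; simp only [hu]; split <;> norm_num
        have hyQ : MemQ C y := by
          refine ⟨fun e => ?_, fun A hA => ?_⟩
          · rw [hycoef]
            exact add_nonneg (mul_nonneg (by linarith) (hu0 e))
              (mul_nonneg (by linarith) (hzt0 e))
          · have hs : ∑ e ∈ A, y e = (μ + t) * (∑ e ∈ A, u e)
                + (1 - μ - t) * ∑ e ∈ A, zt e := by
              rw [Finset.mul_sum, Finset.mul_sum, ← Finset.sum_add_distrib]
              exact Finset.sum_congr rfl fun e _ => hycoef e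
            rw [hs, husum A hA, mul_one]
            nlinarith [hztsum A hA]
        have hwQ : MemQ C w := by
          refine ⟨fun e => ?_, fun A hA => ?_⟩
          · rw [hwcoef]
            exact add_nonneg (mul_nonneg (by linarith) (hu0 e))
              (mul_nonneg (by linarith) (hzt0 e))
          · have hs : ∑ e ∈ A, w e = (μ - t) * (∑ e ∈ A, u e)
                + (1 - μ + t) * ∑ e ∈ A, zt e := by
              rw [Finset.mul_sum, Finset.mul_sum, ← Finset.sum_add_distrib]
              exact Finset.sum_congr rfl fun e _ => hwcoef e
            rw [hs, husum A hA, mul_one]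
            nlinarith [hztsum A hA]
        have heqyw := hx.2 y w hyQ hwQ (by funext e; simp only [hy, hw]; ring)
        have h3 : y ⟨i0, α i0⟩ = w ⟨i0, α i0⟩ := congrFun heqyw _
        have hue : u ⟨i0, α i0⟩ = 1 := by simp [hu]
        have hze : zt ⟨i0, α i0⟩ = 0 := by
          simp only [hzt, hue, mul_one]
          rw [← hμ, sub_self, zero_div]
        simp only [hy, hw, hue, hze] at h3
        linarith
      · -- μ = 1 : x is the 0/1 indicator of part i0
        have hval : ∀ e : (Σ j, W j), x e = if e.1 = i0 then 1 else 0 := by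
          rintro ⟨j, b⟩
          by_cases hj : j = i0
          · subst hj
            rw [if_pos rfl]
            have hge : 1 ≤ x ⟨j, b⟩ := heq1 ▸ hα j b
            by_contra hne
            have hgt : 1 < x ⟨j, b⟩ := lt_of_le_of_ne hge (Ne.symm hne)
            refine Stmt5Aux.extreme_no_slack C x hx ⟨j, b⟩ (by linarith) ?_
            intro A hA hmem
            calc (1:ℝ) < x ⟨j, b⟩ := hgt
              _ ≤ ∑ e ∈ A, x e := Finset.single_le_sum (fun e _ => hx0 e) hmem
          · rw [if_neg hj]
            by_contra hne
            have hpos : 0 < x ⟨j, b⟩ := lt_of_le_of_ne (hx0 _) (Ne.symm hne)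
            refine Stmt5Aux.extreme_no_slack C x hx ⟨j, b⟩ hpos ?_
            intro A hA hmem
            obtain ⟨e', he'A, he'1, -⟩ := Stmt5Aux.part_rep (hmulti A hA) i0
            have hne' : (⟨j, b⟩ : Σ j, W j) ≠ e' := by
              intro h; rw [← h] at he'1; exact hj he'1
            have hx' : 1 ≤ x e' := by
              rcases e' with ⟨j', b'⟩
              have : j' = i0 := he'1
              subst this
              exact heq1 ▸ hα j' b'
            have hpair : x ⟨j, b⟩ + x e' ≤ ∑ e ∈ A, x e := by
              have hsub : ({⟨j, b⟩, e'} : Finset (Σ j, W j)) ⊆ A := by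
                intro e he
                rcases Finset.mem_insert.1 he with rfl | he
                · exact hmem
                · rw [Finset.mem_singleton.1 he]; exact he'A
              calc x ⟨j, b⟩ + x e' = ∑ e ∈ ({⟨j, b⟩, e'} : Finset (Σ j, W j)), x e :=
                  (Finset.sum_pair hne').symm
                _ ≤ _ := Finset.sum_le_sum_of_subset_of_nonneg hsub fun e _ _ => hx0 e
            linarith
        rw [hval v]
        by_cases hv : v.1 = i0
        · exact ⟨1, by rw [if_pos hv]; norm_num⟩
        · exact ⟨0, by rw [if_neg hv]; norm_num⟩
end
end

section
/- Take integers n >= 3 and a prime power q, and let S be a subspace of GF(q)^n. If the multipartite uniform clutter mult(S) does not have Delta_3 as a minor, and S does not admit a basis of vectors with pairwise disjoint supports, then q is a power of 2 and mult(S) contains Q_6 as a minor. -/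
set_option maxHeartbeats 1000000
set_option maxRecDepth 10000


open scoped Classical
noncomputable section

/-- The support of a vector. -/
def suppF {ι : Type*} [Fintype ι] {F : Type*} [Zero F] (x : ι → F) : Finset ι :=
  Finset.univ.filter fun i => x i ≠ 0

/-- `S` admits a basis of vectors with pairwise disjoint supports. -/
def HasDisjointSupportBasis {F : Type*} [Field F] {n : ℕ}
    (S : Submodule F (Fin n → F)) : Prop :=
  ∃ (r : ℕ) (v : Fin r → (Fin n → F)),
    (∀ i j, i ≠ j → Disjoint (suppF (v i)) (suppF (v j))) ∧
    LinearIndependent F v ∧ Submodule.span F (Set.range v) = S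

/-- The multipartite uniform clutter of a subspace. -/
def multSub {F : Type*} [Field F] [Fintype F] {ι : Type*} [Fintype ι]
    (S : Submodule F (ι → F)) : Finset (Finset (Σ _ : ι, F)) :=
  (Finset.univ.filter fun x : ι → F => x ∈ S).image
    fun x => Finset.univ.image fun i => (⟨i, x i⟩ : Σ _ : ι, F)

/-- `Δ₃`, the clutter of edges of a triangle. -/
def Delta3 : Finset (Finset (Fin 3)) := {{0, 1}, {1, 2}, {0, 2}}

/-- `Q₆`, the clutter of triangles of `K₄`, with parts `{0,1}, {2,3}, {4,5}`. -/
def Q6 : Finset (Finset (Fin 6)) := {{0, 2, 4}, {0, 3, 5}, {1, 2, 5}, {1, 3, 4}}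


namespace Stmt10

variable {F : Type*} [Field F] {n : ℕ}

/-- Subspace of vectors vanishing on `D`. -/
def zeroOn (F : Type*) [Field F] (n : ℕ) (D : Finset (Fin n)) : Submodule F (Fin n → F) where
  carrier := {x | ∀ m ∈ D, x m = 0}
  add_mem' := by intro a b ha hb m hm; simp [ha m hm, hb m hm]
  zero_mem' := by intro m _; rfl
  smul_mem' := by intro c x hx m hm; simp [hx m hm]

lemma mem_zeroOn {D : Finset (Fin n)} {x : Fin n → F} :
    x ∈ zeroOn F n D ↔ ∀ m ∈ D, x m = 0 := Iff.rfl

lemma zeroOn_union (D₁ D₂ : Finset (Fin n)) :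
    zeroOn F n (D₁ ∪ D₂) = zeroOn F n D₁ ⊓ zeroOn F n D₂ := by
  ext x
  simp only [mem_zeroOn, Submodule.mem_inf, Finset.mem_union]
  constructor
  · intro h; exact ⟨fun m hm => h m (Or.inl hm), fun m hm => h m (Or.inr hm)⟩
  · rintro ⟨h1, h2⟩ m (hm | hm); exacts [h1 m hm, h2 m hm]

lemma zeroOn_empty : zeroOn F n ∅ = ⊤ := by
  ext x; simp [mem_zeroOn]

/-- `u` is separable in `S`. -/
def Sep (S : Submodule F (Fin n → F)) (u : Fin n → F) : Prop :=
  ∀ x ∈ S, ∀ p q : Fin n, u p ≠ 0 → u q ≠ 0 → u p * x q = u q * x p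

/-- Totally non-separable. -/
def TNS (S : Submodule F (Fin n → F)) : Prop :=
  ∀ u ∈ S, u ≠ 0 → ∃ x ∈ S, ∃ p q : Fin n, u p ≠ 0 ∧ u q ≠ 0 ∧ x p = 0 ∧ x q ≠ 0

lemma sep_of_no_witness {S : Submodule F (Fin n → F)} {u : Fin n → F} (hu : u ∈ S)
    (h : ∀ x ∈ S, ∀ p q : Fin n, ¬(u p ≠ 0 ∧ u q ≠ 0 ∧ x p = 0 ∧ x q ≠ 0)) :
    Sep S u := by
  intro x hx p q hp hq
  by_contra hne
  set y : Fin n → F := u p • x - x p • u with hy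
  have hyS : y ∈ S := Submodule.sub_mem S (Submodule.smul_mem S _ hx) (Submodule.smul_mem S _ hu)
  have hyp : y p = 0 := by simp [hy, mul_comm]
  have hyq : y q ≠ 0 := by
    simp only [hy, Pi.sub_apply, Pi.smul_apply, smul_eq_mul]
    intro h0
    exact hne (by linear_combination h0)
  exact h y hyS p q ⟨hp, hq, hyp, hyq⟩

lemma db_of_sep {S : Submodule F (Fin n → F)} {u : Fin n → F} (huS : u ∈ S) (hu : u ≠ 0)
    (hsep : Sep S u) (hdb : HasDisjointSupportBasis (S ⊓ zeroOn F n (suppF u))) :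
    HasDisjointSupportBasis S := by
  obtain ⟨r, v, hdisj, hli, hspan⟩ := hdb
  obtain ⟨m₀, hm₀⟩ : ∃ m₀, u m₀ ≠ 0 := by
    by_contra h; push_neg at h; exact hu (funext h)
  have hvmem : ∀ t, v t ∈ S ⊓ zeroOn F n (suppF u) := by
    intro t
    rw [← hspan]
    exact Submodule.subset_span ⟨t, rfl⟩
  refine ⟨r + 1, Fin.cons u v, ?_, ?_, ?_⟩
  · have key : ∀ t', Disjoint (suppF u) (suppF (v t')) := by
      intro t'
      rw [Finset.disjoint_left]
      intro m hm
      have := ((hvmem t').2) m hm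
      simp [suppF, this]
    intro s t hst
    rcases Fin.eq_zero_or_eq_succ s with rfl | ⟨s', rfl⟩ <;>
      rcases Fin.eq_zero_or_eq_succ t with rfl | ⟨t', rfl⟩
    · exact absurd rfl hst
    · simpa using key t'
    · simpa using (key s').symm
    · simp only [Fin.cons_succ]
      exact hdisj s' t' (fun h => hst (by rw [h]))
  · rw [linearIndependent_fin_cons]
    refine ⟨hli, ?_⟩
    rw [hspan]
    intro hmem
    exact hm₀ (hmem.2 m₀ (by simp [suppF, hm₀]))
  · rw [Fin.range_cons, Submodule.span_insert, hspan]
    apply le_antisymm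
    · exact sup_le ((Submodule.span_singleton_le_iff_mem _ _).2 huS) inf_le_left
    · intro x hx
      set lam := x m₀ * (u m₀)⁻¹ with hlam
      have hxz : x - lam • u ∈ S ⊓ zeroOn F n (suppF u) := by
        refine ⟨Submodule.sub_mem S hx (Submodule.smul_mem S _ huS), ?_⟩
        intro m hm
        simp only [suppF, Finset.mem_filter] at hm
        have hs := hsep x hx m₀ m hm₀ hm.2
        simp only [Pi.sub_apply, Pi.smul_apply, smul_eq_mul, hlam]
        field_simp
        linear_combination hs
      have : x = lam • u + (x - lam • u) := by abel
      rw [this]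
      exact Submodule.add_mem _ (Submodule.mem_sup_left
        (Submodule.smul_mem _ _ (Submodule.mem_span_singleton_self u))) (Submodule.mem_sup_right hxz)

/-- The key configuration extracted from non-existence of a disjoint-support basis. -/
def GoodConfig (S : Submodule F (Fin n → F)) : Prop :=
  ∃ (D : Finset (Fin n)) (i j k : Fin n) (a b : Fin n → F),
    i ≠ j ∧ i ≠ k ∧ j ≠ k ∧
    a ∈ S ∧ b ∈ S ∧ (∀ m ∈ D, a m = 0) ∧ (∀ m ∈ D, b m = 0) ∧
    a i = 0 ∧ a j ≠ 0 ∧ a k ≠ 0 ∧ b i ≠ 0 ∧ b j = 0 ∧ b k ≠ 0 ∧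
    i ∉ D ∧ j ∉ D ∧ k ∉ D ∧
    (∀ s ∈ S, (∀ m ∈ D, s m = 0) →
      ∃ α β : F, s i = β * b i ∧ s j = α * a j ∧ s k = α * a k + β * b k)

lemma goodConfig_of_slice {S : Submodule F (Fin n → F)} {D₀ : Finset (Fin n)}
    (h : GoodConfig (S ⊓ zeroOn F n D₀)) : GoodConfig S := by
  obtain ⟨D, i, j, k, a, b, hij, hik, hjk, haS, hbS, haD, hbD, hai, haj, hak, hbi, hbj, hbk,
    hiD, hjD, hkD, hspan⟩ := h
  refine ⟨D₀ ∪ D, i, j, k, a, b, hij, hik, hjk, haS.1, hbS.1, ?_, ?_, hai, haj, hak, hbi, hbj,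
    hbk, ?_, ?_, ?_, ?_⟩
  · intro m hm; rcases Finset.mem_union.1 hm with h | h; exacts [haS.2 m h, haD m h]
  · intro m hm; rcases Finset.mem_union.1 hm with h | h; exacts [hbS.2 m h, hbD m h]
  · intro hmem
    rcases Finset.mem_union.1 hmem with h | h
    · exact hbi (hbS.2 i h)
    · exact hiD h
  · intro hmem
    rcases Finset.mem_union.1 hmem with h | h
    · exact haj (haS.2 j h)
    · exact hjD h
  · intro hmem
    rcases Finset.mem_union.1 hmem with h | h
    · exact hak (haS.2 k h)
    · exact hkD h
  · intro s hs hsD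
    exact hspan s ⟨hs, fun m hm => hsD m (Finset.mem_union_left _ hm)⟩
      (fun m hm => hsD m (Finset.mem_union_right _ hm))

lemma lemA : ∀ (N : ℕ) (S : Submodule F (Fin n → F)), Module.finrank F S ≤ N →
    ¬HasDisjointSupportBasis S →
    ∃ D : Finset (Fin n), TNS (S ⊓ zeroOn F n D) ∧ S ⊓ zeroOn F n D ≠ ⊥ := by
  intro N
  induction N with
  | zero =>
    intro S hfr hdb
    exfalso
    have : S = ⊥ := by
      have := Submodule.finrank_eq_zero (R := F) (M := Fin n → F) (S := S)
      rw [← this]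
      omega
    apply hdb
    refine ⟨0, Fin.elim0, by intro i; exact i.elim0, linearIndependent_empty_type, ?_⟩
    rw [Set.range_eq_empty, Submodule.span_empty, this]
  | succ N ih =>
    intro S hfr hdb
    by_cases htns : TNS S
    · refine ⟨∅, ?_, ?_⟩ <;> rw [zeroOn_empty, inf_top_eq]
      · exact htns
      · intro hbot
        apply hdb
        rw [hbot]
        refine ⟨0, Fin.elim0, by intro i; exact i.elim0, linearIndependent_empty_type, ?_⟩
        rw [Set.range_eq_empty, Submodule.span_empty]
    · simp only [TNS, not_forall] at htns
      obtain ⟨u, huS, hu, hwit⟩ := htns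
      push_neg at hwit
      have hsep : Sep S u := by
        apply sep_of_no_witness huS
        intro x hx p q hcon
        obtain ⟨h1, h2, h3, h4⟩ := hcon
        exact h4 (hwit x hx p q h1 h2 h3)
      set S' := S ⊓ zeroOn F n (suppF u) with hS'
      have hdb' : ¬HasDisjointSupportBasis S' := fun h => hdb (db_of_sep huS hu hsep h)
      have hlt : S' < S := by
        refine lt_of_le_of_ne inf_le_left ?_
        intro he
        obtain ⟨m₀, hm₀⟩ : ∃ m₀, u m₀ ≠ 0 := by
          by_contra h; push_neg at h; exact hu (funext h)
        have : u ∈ S' := he ▸ huS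
        exact hm₀ (this.2 m₀ (by simp [suppF, hm₀]))
      have hfr' : Module.finrank F S' ≤ N := by
        have := Submodule.finrank_lt_finrank_of_lt (s := S') (t := S) hlt
        omega
      obtain ⟨D, hT, hB⟩ := ih S' hfr' hdb'
      refine ⟨suppF u ∪ D, ?_, ?_⟩ <;> rw [zeroOn_union, ← inf_assoc, ← hS']
      · exact hT
      · exact hB

lemma lemB : ∀ (N : ℕ) (S : Submodule F (Fin n → F)), Module.finrank F S ≤ N →
    TNS S → S ≠ ⊥ → GoodConfig S := by
  intro N
  induction N with
  | zero =>
    intro S hfr _ hbot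
    exfalso
    apply hbot
    rw [← Submodule.finrank_eq_zero (R := F) (M := Fin n → F) (S := S)]
    omega
  | succ N ih =>
    intro S hfr htns hbot
    obtain ⟨w, hwS, hw⟩ := Submodule.exists_mem_ne_zero_of_ne_bot hbot
    obtain ⟨m, hm⟩ : ∃ m, w m ≠ 0 := by
      by_contra h; push_neg at h; exact hw (funext h)
    set w₀ : Fin n → F := (w m)⁻¹ • w with hw₀
    have hw₀S : w₀ ∈ S := Submodule.smul_mem S _ hwS
    have hw₀m : w₀ m = 1 := by simp [hw₀, inv_mul_cancel₀ hm]
    set W' := S ⊓ zeroOn F n {m} with hW'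
    have hsub : ∀ s ∈ S, s - s m • w₀ ∈ W' := by
      intro s hs
      refine ⟨Submodule.sub_mem S hs (Submodule.smul_mem S _ hw₀S), ?_⟩
      intro m' hm'
      rw [Finset.mem_singleton] at hm'
      subst hm'
      simp [hw₀m]
    by_cases hWbot : W' = ⊥
    · exfalso
      have hall : ∀ s ∈ S, s = s m • w₀ := by
        intro s hs
        have := hsub s hs
        rw [hWbot, Submodule.mem_bot] at this
        have := sub_eq_zero.1 this
        exact this
      obtain ⟨x, hxS, p, q, hp, hq, hxp, hxq⟩ :=
        htns w₀ hw₀S (fun h => by rw [h] at hw₀m; simp at hw₀m)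
      have hx := hall x hxS
      rw [hx] at hxp hxq
      simp only [Pi.smul_apply, smul_eq_mul] at hxp hxq
      rcases mul_eq_zero.1 hxp with h | h
      · exact hxq (by simp [h])
      · exact hp h
    · by_cases hWtns : TNS W'
      · have hlt : W' < S := by
          refine lt_of_le_of_ne inf_le_left ?_
          intro he
          have : w ∈ W' := he ▸ hwS
          exact hm (this.2 m (Finset.mem_singleton_self m))
        have hfr' : Module.finrank F W' ≤ N := by
          have := Submodule.finrank_lt_finrank_of_lt (s := W') (t := S) hlt
          omega
        exact goodConfig_of_slice (ih W' hfr' hWtns hWbot)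
      · -- extract separable u in W', build config directly
        simp only [TNS, not_forall] at hWtns
        obtain ⟨u, huW, hu, hwit⟩ := hWtns
        push_neg at hwit
        have hsep : Sep W' u := by
          apply sep_of_no_witness huW
          intro x hx p q hcon
          obtain ⟨h1, h2, h3, h4⟩ := hcon
          exact h4 (hwit x hx p q h1 h2 h3)
        obtain ⟨xs, hxsS, i, j, hui, huj, hxi, hxj⟩ := htns u huW.1 hu
        obtain ⟨δ, hδ⟩ : ∃ d : F, d = u j * w₀ i - u i * w₀ j := ⟨_, rfl⟩
        have key : ∀ s ∈ S, u j * s i - u i * s j = s m * δ := by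
          intro s hs
          have ht := hsub s hs
          have h0 : u j * (s - s m • w₀) i - u i * (s - s m • w₀) j = 0 := by
            have := hsep _ ht i j hui huj
            linear_combination -this
          simp only [Pi.sub_apply, Pi.smul_apply, smul_eq_mul] at h0
          linear_combination h0 - s m * hδ
        have hδne : δ ≠ 0 := by
          intro h0
          have hk := key xs hxsS
          rw [hxi, h0, mul_zero, mul_zero] at hk
          have h2 : u i * xs j = 0 := by linear_combination -hk
          rcases mul_eq_zero.1 h2 with h | h
          · exact hui h
          · exact hxj h
        have hum : u m = 0 := huW.2 m (Finset.mem_singleton_self m)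
        have him : i ≠ m := fun h => hui (h ▸ hum)
        have hjm : j ≠ m := fun h => huj (h ▸ hum)
        have hijne : i ≠ j := fun h => hxj (h ▸ hxi)
        set b : Fin n → F := xs j • u - u j • xs with hb
        have hbS : b ∈ S := Submodule.sub_mem S (Submodule.smul_mem S _ huW.1)
          (Submodule.smul_mem S _ hxsS)
        have hbi : b i = xs j * u i := by simp [hb, hxi]
        have hbj : b j = 0 := by simp [hb]; ring
        have hbine : b i ≠ 0 := by rw [hbi]; exact mul_ne_zero hxj hui
        have ham : xs m * δ = -(u i * xs j) := by
          have hk := key xs hxsS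
          rw [hxi] at hk
          linear_combination -hk
        have hbm : b m * δ = u j * b i := by
          have hk := key b hbS
          rw [hbj] at hk
          linear_combination -hk
        have hamne : xs m ≠ 0 := by
          intro h0
          rw [h0, zero_mul] at ham
          exact mul_ne_zero hui hxj (by linear_combination ham)
        have hbmne : b m ≠ 0 := by
          intro h0
          rw [h0, zero_mul] at hbm
          exact mul_ne_zero huj hbine hbm.symm
        refine ⟨∅, i, j, m, xs, b, hijne, him, hjm, hxsS, hbS, by simp, by simp,
          hxi, hxj, hamne, hbine, hbj, hbmne, by simp, by simp, by simp, ?_⟩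
        intro s hs _
        refine ⟨s j * (xs j)⁻¹, s i * (b i)⁻¹, ?_, ?_, ?_⟩
        · field_simp
        · field_simp
        · have hsm := key s hs
          apply mul_left_cancel₀ hδne
          have e1 : s j * (xs j)⁻¹ * xs j = s j := by field_simp
          have e2 : s i * (b i)⁻¹ * b i = s i := by field_simp
          calc δ * s m = u j * s i - u i * s j := by linear_combination -hsm
          _ = (s i * (b i)⁻¹ * b i) * u j - (s j * (xs j)⁻¹ * xs j) * u i := by
              rw [e1, e2]; ring
          _ = δ * (s j * (xs j)⁻¹ * xs m + s i * (b i)⁻¹ * b m) := by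
              linear_combination (-(s j * (xs j)⁻¹)) * ham - (s i * (b i)⁻¹) * hbm
  -- end
end Stmt10

namespace Stmt10
open Finset
variable {F : Type*} [Field F] [Fintype F] {n : ℕ}

lemma minimalSets_of_card {V : Type*} (G : Finset (Finset V)) (c : ℕ)
    (h : ∀ A ∈ G, A.card = c) : minimalSets G = G := by
  unfold minimalSets
  apply Finset.filter_true_of_mem
  intro A hA B hB hBA
  exact Finset.eq_of_subset_of_card_le hBA (by rw [h A hA, h B hB])

/-- allowed-values deletion set -/
def Idel (vs : Fin n → Finset F) : Finset (Σ _ : Fin n, F) :=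
  Finset.univ.filter fun t => t.2 ∉ vs t.1

/-- contraction set: allowed but not a "vertex" value -/
def Jcon (vs vt : Fin n → Finset F) : Finset (Σ _ : Fin n, F) :=
  Finset.univ.filter fun t => t.2 ∈ vs t.1 ∧ t.2 ∉ vt t.1

lemma disjoint_IJ (vs vt : Fin n → Finset F) : Disjoint (Idel vs) (Jcon vs vt) := by
  rw [Finset.disjoint_left]
  intro t ht ht'
  simp only [Idel, Jcon, Finset.mem_filter] at ht ht'
  exact ht.2 ht'.2.1

lemma key_minor (S : Submodule F (Fin n → F)) (vs vt : Fin n → Finset F) :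
    minorCl (multSub S) (Idel vs) (Jcon vs vt) =
      minimalSets ((Finset.univ.filter fun s : Fin n → F => s ∈ S ∧ ∀ m, s m ∈ vs m).image
        fun s => (Finset.univ.filter fun m => s m ∈ vt m).image
          fun m => (⟨m, s m⟩ : Σ _ : Fin n, F)) := by
  unfold minorCl
  congr 1
  ext A
  simp only [Finset.mem_image, Finset.mem_filter, multSub, Finset.mem_univ, true_and]
  constructor
  · rintro ⟨A', ⟨⟨s, hsS, rfl⟩, hfilt⟩, rfl⟩
    rw [Finset.eq_empty_iff_forall_notMem] at hfilt
    have hall : ∀ m, s m ∈ vs m := by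
      intro m
      by_contra hm
      apply hfilt ⟨m, s m⟩
      simp only [Finset.mem_inter, Finset.mem_image, Idel, Finset.mem_filter, Finset.mem_univ,
        true_and]
      exact ⟨⟨m, rfl⟩, hm⟩
    refine ⟨s, ⟨hsS, hall⟩, ?_⟩
    ext t
    simp only [Finset.mem_sdiff, Finset.mem_image, Finset.mem_univ, true_and, Finset.mem_filter,
      Jcon, not_and, not_not]
    constructor
    · rintro ⟨m, hm, rfl⟩
      exact ⟨⟨m, rfl⟩, fun _ => hm⟩
    · rintro ⟨⟨m, rfl⟩, htJ⟩
      exact ⟨m, htJ (hall m), rfl⟩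
  · rintro ⟨s, ⟨hsS, hall⟩, rfl⟩
    refine ⟨_, ⟨⟨s, hsS, rfl⟩, ?_⟩, ?_⟩
    · rw [Finset.eq_empty_iff_forall_notMem]
      intro t ht
      simp only [Finset.mem_inter, Finset.mem_image, Idel, Finset.mem_filter, Finset.mem_univ,
        true_and] at ht
      obtain ⟨⟨m, rfl⟩, h2⟩ := ht
      exact h2 (hall m)
    · ext t
      simp only [Finset.mem_sdiff, Finset.mem_image, Finset.mem_univ, true_and, Finset.mem_filter,
        Jcon, not_and, not_not]
      constructor
      · rintro ⟨⟨m, rfl⟩, htJ⟩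
        exact ⟨m, htJ (hall m), rfl⟩
      · rintro ⟨m, hm, rfl⟩
        exact ⟨⟨m, rfl⟩, fun _ => hm⟩

lemma filter_univ_eq_pair {p : Fin n → Prop} [DecidablePred p] {i j : Fin n} (hij : i ≠ j)
    (hi : p i) (hj : p j) (ho : ∀ m, p m → m = i ∨ m = j) :
    (Finset.univ.filter p) = {i, j} := by
  ext m
  simp only [Finset.mem_filter, Finset.mem_univ, true_and, Finset.mem_insert,
    Finset.mem_singleton]
  constructor
  · exact ho m
  · rintro (rfl | rfl); exacts [hi, hj]

lemma filter_univ_eq_triple {p : Fin n → Prop} [DecidablePred p] {i j k : Fin n}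
    (hi : p i) (hj : p j) (hk : p k) (ho : ∀ m, p m → m = i ∨ m = j ∨ m = k) :
    (Finset.univ.filter p) = {i, j, k} := by
  ext m
  simp only [Finset.mem_filter, Finset.mem_univ, true_and, Finset.mem_insert,
    Finset.mem_singleton]
  constructor
  · exact ho m
  · rintro (rfl | rfl | rfl); exacts [hi, hj, hk]


section Constructions

variable {S : Submodule F (Fin n → F)}

lemma one_ne_two' (h2 : (2:F) ≠ 0) : (1:F) ≠ 2 := by
  intro h
  apply h2
  have : (1:F) + 1 = 2 := one_add_one_eq_two
  linear_combination this - h - h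

lemma delta3_of_config (cfg : GoodConfig S) (h2 : (2:F) ≠ 0) :
    HasMinorIso (multSub S) Delta3 := by
  classical
  obtain ⟨D, i, j, k, a, b, hij, hik, hjk, haS, hbS, haD, hbD, hai, haj, hak, hbi, hbj, hbk,
    hiD, hjD, hkD, hspan⟩ := cfg
  set x : Fin n → F := (b k)⁻¹ • b with hx
  set y : Fin n → F := (a k)⁻¹ • a with hy
  have hxS : x ∈ S := Submodule.smul_mem S _ hbS
  have hyS : y ∈ S := Submodule.smul_mem S _ haS
  have hxi : x i ≠ 0 := mul_ne_zero (inv_ne_zero hbk) hbi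
  have hxj : x j = 0 := by simp [hx, hbj]
  have hxk : x k = 1 := by simp [hx, inv_mul_cancel₀ hbk]
  have hxD : ∀ m ∈ D, x m = 0 := fun m hm => by simp [hx, hbD m hm]
  have hyi : y i = 0 := by simp [hy, hai]
  have hyj : y j ≠ 0 := mul_ne_zero (inv_ne_zero hak) haj
  have hyk : y k = 1 := by simp [hy, inv_mul_cancel₀ hak]
  have hyD : ∀ m ∈ D, y m = 0 := fun m hm => by simp [hy, haD m hm]
  have h12 : (1:F) ≠ 2 := one_ne_two' h2
  -- allowed/vertex value sets
  set vs : Fin n → Finset F := fun m =>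
    if m = i then {x i, 2 * x i} else if m = j then {0, y j} else if m = k then {1, 2}
      else if m ∈ D then {0} else Finset.univ with hvs
  set vt : Fin n → Finset F := fun m =>
    if m = i then {x i} else if m = j then {0} else if m = k then {2} else ∅ with hvt
  have hvsi : vs i = {x i, 2 * x i} := by simp [hvs]
  have hvsj : vs j = {0, y j} := by simp [hvs, Ne.symm hij]
  have hvsk : vs k = {1, 2} := by simp [hvs, Ne.symm hik, Ne.symm hjk]
  have hvsD : ∀ m ∈ D, vs m = {0} := by
    intro m hm
    simp only [hvs]
    rw [if_neg (fun h : m = i => hiD (by rwa [← h])), if_neg (fun h : m = j => hjD (by rwa [← h])),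
      if_neg (fun h : m = k => hkD (by rwa [← h])), if_pos hm]
  have hvti : vt i = {x i} := by simp [hvt]
  have hvtj : vt j = {0} := by simp [hvt, Ne.symm hij]
  have hvtk : vt k = {2} := by simp [hvt, Ne.symm hik, Ne.symm hjk]
  have hvto : ∀ m, m ≠ i → m ≠ j → m ≠ k → vt m = ∅ := by
    intro m h1 h2 h3
    simp only [hvt]; rw [if_neg h1, if_neg h2, if_neg h3]
  -- the three target members
  set uu : Σ _ : Fin n, F := ⟨i, x i⟩ with huu
  set ww : Σ _ : Fin n, F := ⟨j, 0⟩ with hww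
  set vv : Σ _ : Fin n, F := ⟨k, 2⟩ with hvv
  -- image lemmas
  have img1 : ∀ s : Fin n → F, s i = x i → s j = 0 → s k = 1 →
      ((Finset.univ.filter fun m => s m ∈ vt m).image
        fun m => (⟨m, s m⟩ : Σ _ : Fin n, F)) = {uu, ww} := by
    intro s e1 e2 e3
    have hf : (Finset.univ.filter fun m => s m ∈ vt m) = {i, j} := by
      apply filter_univ_eq_pair hij
      · rw [hvti, e1]; exact Finset.mem_singleton_self _
      · rw [hvtj, e2]; exact Finset.mem_singleton_self _
      · intro m hm
        by_contra hcon
        push_neg at hcon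
        by_cases hmk : m = k
        · subst hmk
          rw [hvtk, e3, Finset.mem_singleton] at hm
          exact h12 hm
        · rw [hvto m hcon.1 hcon.2 hmk] at hm
          exact absurd hm (Finset.notMem_empty _)
    rw [hf, Finset.image_insert, Finset.image_singleton, e1, e2]
  have img2 : ∀ s : Fin n → F, s i = 2 * x i → s j = 0 → s k = 2 →
      ((Finset.univ.filter fun m => s m ∈ vt m).image
        fun m => (⟨m, s m⟩ : Σ _ : Fin n, F)) = {ww, vv} := by
    intro s e1 e2 e3
    have hf : (Finset.univ.filter fun m => s m ∈ vt m) = {j, k} := by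
      apply filter_univ_eq_pair hjk
      · rw [hvtj, e2]; exact Finset.mem_singleton_self _
      · rw [hvtk, e3]; exact Finset.mem_singleton_self _
      · intro m hm
        by_contra hcon
        push_neg at hcon
        by_cases hmi : m = i
        · subst hmi
          rw [hvti, e1, Finset.mem_singleton] at hm
          apply hxi
          linear_combination hm
        · rw [hvto m hmi hcon.1 hcon.2] at hm
          exact absurd hm (Finset.notMem_empty _)
    rw [hf, Finset.image_insert, Finset.image_singleton, e2, e3]
  have img3 : ∀ s : Fin n → F, s i = x i → s j = y j → s k = 2 →
      ((Finset.univ.filter fun m => s m ∈ vt m).image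
        fun m => (⟨m, s m⟩ : Σ _ : Fin n, F)) = {uu, vv} := by
    intro s e1 e2 e3
    have hf : (Finset.univ.filter fun m => s m ∈ vt m) = {i, k} := by
      apply filter_univ_eq_pair hik
      · rw [hvti, e1]; exact Finset.mem_singleton_self _
      · rw [hvtk, e3]; exact Finset.mem_singleton_self _
      · intro m hm
        by_contra hcon
        push_neg at hcon
        by_cases hmj : m = j
        · subst hmj
          rw [hvtj, e2, Finset.mem_singleton] at hm
          exact hyj hm
        · rw [hvto m hcon.1 hmj hcon.2] at hm
          exact absurd hm (Finset.notMem_empty _)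
    rw [hf, Finset.image_insert, Finset.image_singleton, e1, e3]
  -- classification of surviving vectors
  have classify : ∀ s ∈ S, (∀ m, s m ∈ vs m) →
      (s i = x i ∧ s j = 0 ∧ s k = 1) ∨ (s i = 2 * x i ∧ s j = 0 ∧ s k = 2) ∨
      (s i = x i ∧ s j = y j ∧ s k = 2) := by
    intro s hsS hall
    have hsD : ∀ m ∈ D, s m = 0 := by
      intro m hm
      have h := hall m
      rw [hvsD m hm, Finset.mem_singleton] at h
      exact h
    obtain ⟨α, β, e1, e2, e3⟩ := hspan s hsS hsD
    have hci := hall i; rw [hvsi, Finset.mem_insert, Finset.mem_singleton] at hci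
    have hcj := hall j; rw [hvsj, Finset.mem_insert, Finset.mem_singleton] at hcj
    have hck := hall k; rw [hvsk, Finset.mem_insert, Finset.mem_singleton] at hck
    have hβ : β = (b k)⁻¹ ∨ β = 2 * (b k)⁻¹ := by
      rcases hci with h | h
      · left
        apply mul_right_cancel₀ hbi
        rw [← e1, h, hx]; simp [mul_comm]
      · right
        apply mul_right_cancel₀ hbi
        rw [← e1, h, hx]; simp [Pi.smul_apply, smul_eq_mul]; ring
    have hα : α = 0 ∨ α = (a k)⁻¹ := by
      rcases hcj with h | h
      · left
        have : α * a j = 0 := by rw [← e2, h]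
        rcases mul_eq_zero.1 this with h' | h'
        · exact h'
        · exact absurd h' haj
      · right
        apply mul_right_cancel₀ haj
        rw [← e2, h, hy]; simp [Pi.smul_apply, smul_eq_mul, mul_comm]
    rcases hα with hα | hα <;> rcases hβ with hβ | hβ
    · left
      refine ⟨?_, ?_, ?_⟩
      · rw [e1, hβ, hx]; simp [mul_comm]
      · rw [e2, hα]; ring
      · rw [e3, hα, hβ]; field_simp; ring
    · right; left
      refine ⟨?_, ?_, ?_⟩
      · rw [e1, hβ, hx]; simp [Pi.smul_apply, smul_eq_mul]; ring
      · rw [e2, hα]; ring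
      · rw [e3, hα, hβ]; field_simp; ring
    · right; right
      refine ⟨?_, ?_, ?_⟩
      · rw [e1, hβ, hx]; simp [mul_comm]
      · rw [e2, hα, hy]; simp [Pi.smul_apply, smul_eq_mul, mul_comm]
      · rw [e3, hα, hβ]
        rw [inv_mul_cancel₀ hak, inv_mul_cancel₀ hbk]
        exact one_add_one_eq_two
    · exfalso
      rw [e3, hα, hβ] at hck
      rw [inv_mul_cancel₀ hak] at hck
      have h2bk : 2 * (b k)⁻¹ * b k = 2 := by field_simp
      rw [h2bk] at hck
      rcases hck with h | h
      · exact h2 (by linear_combination h)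
      · exact (one_ne_zero : (1:F) ≠ 0) (by linear_combination h)
  -- the three vectors realizing the patterns
  set x2 : Fin n → F := (2 * (b k)⁻¹) • b with hx2
  have hx2S : x2 ∈ S := Submodule.smul_mem S _ hbS
  have hx2i : x2 i = 2 * x i := by simp [hx2, hx]; ring
  have hx2j : x2 j = 0 := by simp [hx2, hbj]
  have hx2k : x2 k = 2 := by simp [hx2]; field_simp
  set x3 : Fin n → F := x + y with hx3
  have hx3S : x3 ∈ S := Submodule.add_mem S hxS hyS
  have hx3i : x3 i = x i := by simp [hx3, hyi]
  have hx3j : x3 j = y j := by simp [hx3, hxj]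
  have hx3k : x3 k = 2 := by
    simp only [hx3, Pi.add_apply, hxk, hyk]
    exact one_add_one_eq_two
  have hxall : ∀ m, x m ∈ vs m := by
    intro m
    by_cases h1 : m = i
    · subst h1; rw [hvsi]; exact Finset.mem_insert_self _ _
    by_cases h2' : m = j
    · subst h2'; rw [hvsj, hxj]; exact Finset.mem_insert_self _ _
    by_cases h3 : m = k
    · subst h3; rw [hvsk, hxk]; exact Finset.mem_insert_self _ _
    by_cases h4 : m ∈ D
    · rw [hvsD m h4, hxD m h4]; exact Finset.mem_singleton_self _
    · simp only [hvs]; rw [if_neg h1, if_neg h2', if_neg h3, if_neg h4]; exact Finset.mem_univ _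
  have hx2all : ∀ m, x2 m ∈ vs m := by
    intro m
    by_cases h1 : m = i
    · subst h1; rw [hvsi, hx2i]; exact Finset.mem_insert_of_mem (Finset.mem_singleton_self _)
    by_cases h2' : m = j
    · subst h2'; rw [hvsj, hx2j]; exact Finset.mem_insert_self _ _
    by_cases h3 : m = k
    · subst h3; rw [hvsk, hx2k]; exact Finset.mem_insert_of_mem (Finset.mem_singleton_self _)
    by_cases h4 : m ∈ D
    · rw [hvsD m h4]
      have : x2 m = 0 := by simp [hx2, hbD m h4]
      rw [this]; exact Finset.mem_singleton_self _
    · simp only [hvs]; rw [if_neg h1, if_neg h2', if_neg h3, if_neg h4]; exact Finset.mem_univ _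
  have hx3all : ∀ m, x3 m ∈ vs m := by
    intro m
    by_cases h1 : m = i
    · subst h1; rw [hvsi, hx3i]; exact Finset.mem_insert_self _ _
    by_cases h2' : m = j
    · subst h2'; rw [hvsj, hx3j]; exact Finset.mem_insert_of_mem (Finset.mem_singleton_self _)
    by_cases h3 : m = k
    · subst h3; rw [hvsk, hx3k]; exact Finset.mem_insert_of_mem (Finset.mem_singleton_self _)
    by_cases h4 : m ∈ D
    · rw [hvsD m h4]
      have : x3 m = 0 := by simp [hx3, hxD m h4, hyD m h4]
      rw [this]; exact Finset.mem_singleton_self _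
    · simp only [hvs]; rw [if_neg h1, if_neg h2', if_neg h3, if_neg h4]; exact Finset.mem_univ _
  -- distinctness of the vertices
  have huw : uu ≠ ww := fun h => hij (congrArg Sigma.fst h)
  have huv : uu ≠ vv := fun h => hik (congrArg Sigma.fst h)
  have hwv : ww ≠ vv := fun h => hjk (congrArg Sigma.fst h)
  -- the family equality
  have hfam : ((Finset.univ.filter fun s : Fin n → F => s ∈ S ∧ ∀ m, s m ∈ vs m).image
      fun s => (Finset.univ.filter fun m => s m ∈ vt m).image
        fun m => (⟨m, s m⟩ : Σ _ : Fin n, F)) = {({uu, ww} : Finset _), {ww, vv}, {uu, vv}} := by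
    ext A
    simp only [Finset.mem_image, Finset.mem_filter, Finset.mem_univ, true_and,
      Finset.mem_insert, Finset.mem_singleton]
    constructor
    · rintro ⟨s, ⟨hsS, hall⟩, rfl⟩
      rcases classify s hsS hall with ⟨e1, e2, e3⟩ | ⟨e1, e2, e3⟩ | ⟨e1, e2, e3⟩
      · exact Or.inl (img1 s e1 e2 e3)
      · exact Or.inr (Or.inl (img2 s e1 e2 e3))
      · exact Or.inr (Or.inr (img3 s e1 e2 e3))
    · rintro (rfl | rfl | rfl)
      · exact ⟨x, ⟨hxS, hxall⟩, img1 x rfl hxj hxk⟩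
      · exact ⟨x2, ⟨hx2S, hx2all⟩, img2 x2 hx2i hx2j hx2k⟩
      · exact ⟨x3, ⟨hx3S, hx3all⟩, img3 x3 hx3i hx3j hx3k⟩
  -- cards
  have hcards : ∀ A ∈ ({({uu, ww} : Finset (Σ _ : Fin n, F)), {ww, vv}, {uu, vv}} :
      Finset (Finset (Σ _ : Fin n, F))), A.card = 2 := by
    intro A hA
    simp only [Finset.mem_insert, Finset.mem_singleton] at hA
    rcases hA with rfl | rfl | rfl
    · rw [Finset.card_insert_of_notMem (by simp [huw]), Finset.card_singleton]
    · rw [Finset.card_insert_of_notMem (by simp [hwv]), Finset.card_singleton]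
    · rw [Finset.card_insert_of_notMem (by simp [huv]), Finset.card_singleton]
  -- assemble
  refine ⟨Idel vs, Jcon vs vt, fun t => if t = 0 then uu else if t = 1 then ww else vv,
    disjoint_IJ vs vt, ?_, ?_⟩
  · intro t t' h
    fin_cases t <;> fin_cases t' <;> simp at h ⊢ <;>
      first
        | rfl
        | exact absurd h huw
        | exact absurd h huv
        | exact absurd h hwv
        | exact absurd h.symm huw
        | exact absurd h.symm huv
        | exact absurd h.symm hwv
  · rw [key_minor, hfam, minimalSets_of_card _ 2 hcards]
    have e0 : (if (0:Fin 3) = 0 then uu else if (0:Fin 3) = 1 then ww else vv) = uu := by simp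
    have e1 : (if (1:Fin 3) = 0 then uu else if (1:Fin 3) = 1 then ww else vv) = ww := by simp
    have e2 : (if (2:Fin 3) = 0 then uu else if (2:Fin 3) = 1 then ww else vv) = vv := by
      rw [if_neg (show ¬((2:Fin 3) = 0) by decide), if_neg (show ¬((2:Fin 3) = 1) by decide)]
    simp only [Delta3, Finset.image_insert, Finset.image_singleton, e0, e1, e2]
    norm_num
    ext B
    simp only [Finset.mem_insert, Finset.mem_singleton, Finset.ext_iff]


lemma q6_of_config (cfg : GoodConfig S) (h2 : (2:F) = 0) :
    HasMinorIso (multSub S) Q6 := by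
  classical
  obtain ⟨D, i, j, k, a, b, hij, hik, hjk, haS, hbS, haD, hbD, hai, haj, hak, hbi, hbj, hbk,
    hiD, hjD, hkD, hspan⟩ := cfg
  set x : Fin n → F := (b k)⁻¹ • b with hx
  set y : Fin n → F := (a k)⁻¹ • a with hy
  have hxS : x ∈ S := Submodule.smul_mem S _ hbS
  have hyS : y ∈ S := Submodule.smul_mem S _ haS
  have hxi : x i ≠ 0 := mul_ne_zero (inv_ne_zero hbk) hbi
  have hxj : x j = 0 := by simp [hx, hbj]
  have hxk : x k = 1 := by simp [hx, inv_mul_cancel₀ hbk]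
  have hxD : ∀ m ∈ D, x m = 0 := fun m hm => by simp [hx, hbD m hm]
  have hyi : y i = 0 := by simp [hy, hai]
  have hyj : y j ≠ 0 := mul_ne_zero (inv_ne_zero hak) haj
  have hyk : y k = 1 := by simp [hy, inv_mul_cancel₀ hak]
  have hyD : ∀ m ∈ D, y m = 0 := fun m hm => by simp [hy, haD m hm]
  set vs : Fin n → Finset F := fun m =>
    if m = i then {0, x i} else if m = j then {0, y j} else if m = k then {0, 1}
      else if m ∈ D then {0} else Finset.univ with hvs
  set vt : Fin n → Finset F := fun m =>
    if m = i then {0, x i} else if m = j then {0, y j} else if m = k then {0, 1} else ∅ with hvt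
  have hvsi : vs i = {0, x i} := by simp [hvs]
  have hvsj : vs j = {0, y j} := by simp [hvs, Ne.symm hij]
  have hvsk : vs k = {0, 1} := by simp [hvs, Ne.symm hik, Ne.symm hjk]
  have hvsD : ∀ m ∈ D, vs m = {0} := by
    intro m hm
    simp only [hvs]
    rw [if_neg (fun h : m = i => hiD (by rwa [← h])), if_neg (fun h : m = j => hjD (by rwa [← h])),
      if_neg (fun h : m = k => hkD (by rwa [← h])), if_pos hm]
  have hvti : vt i = {0, x i} := by simp [hvt]
  have hvtj : vt j = {0, y j} := by simp [hvt, Ne.symm hij]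
  have hvtk : vt k = {0, 1} := by simp [hvt, Ne.symm hik, Ne.symm hjk]
  have hvto : ∀ m, m ≠ i → m ≠ j → m ≠ k → vt m = ∅ := by
    intro m h1 h2 h3
    simp only [hvt]; rw [if_neg h1, if_neg h2, if_neg h3]
  -- the image of any survivor
  have img : ∀ s : Fin n → F, (∀ m, s m ∈ vs m) →
      ((Finset.univ.filter fun m => s m ∈ vt m).image
        fun m => (⟨m, s m⟩ : Σ _ : Fin n, F)) =
        {⟨i, s i⟩, ⟨j, s j⟩, ⟨k, s k⟩} := by
    intro s hall
    have hf : (Finset.univ.filter fun m => s m ∈ vt m) = {i, j, k} := by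
      apply filter_univ_eq_triple
      · rw [hvti, ← hvsi]; exact hall i
      · rw [hvtj, ← hvsj]; exact hall j
      · rw [hvtk, ← hvsk]; exact hall k
      · intro m hm
        by_contra hcon
        push_neg at hcon
        rw [hvto m hcon.1 hcon.2.1 hcon.2.2] at hm
        exact absurd hm (Finset.notMem_empty _)
    rw [hf, Finset.image_insert, Finset.image_insert, Finset.image_singleton]
  -- classification
  have classify : ∀ s ∈ S, (∀ m, s m ∈ vs m) →
      (s i = 0 ∧ s j = 0 ∧ s k = 0) ∨ (s i = 0 ∧ s j = y j ∧ s k = 1) ∨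
      (s i = x i ∧ s j = 0 ∧ s k = 1) ∨ (s i = x i ∧ s j = y j ∧ s k = 0) := by
    intro s hsS hall
    have hsD : ∀ m ∈ D, s m = 0 := by
      intro m hm
      have h := hall m
      rwa [hvsD m hm, Finset.mem_singleton] at h
    obtain ⟨α, β, e1, e2, e3⟩ := hspan s hsS hsD
    have hci := hall i; rw [hvsi, Finset.mem_insert, Finset.mem_singleton] at hci
    have hcj := hall j; rw [hvsj, Finset.mem_insert, Finset.mem_singleton] at hcj
    have hβ : β = 0 ∨ β = (b k)⁻¹ := by
      rcases hci with h | h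
      · left
        have h0 : β * b i = 0 := by rw [← e1, h]
        rcases mul_eq_zero.1 h0 with h' | h'
        · exact h'
        · exact absurd h' hbi
      · right
        apply mul_right_cancel₀ hbi
        rw [← e1, h, hx]; simp [mul_comm]
    have hα : α = 0 ∨ α = (a k)⁻¹ := by
      rcases hcj with h | h
      · left
        have h0 : α * a j = 0 := by rw [← e2, h]
        rcases mul_eq_zero.1 h0 with h' | h'
        · exact h'
        · exact absurd h' haj
      · right
        apply mul_right_cancel₀ haj
        rw [← e2, h, hy]; simp [Pi.smul_apply, smul_eq_mul, mul_comm]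
    rcases hα with hα | hα <;> rcases hβ with hβ | hβ
    · left
      refine ⟨by rw [e1, hβ]; ring, by rw [e2, hα]; ring, by rw [e3, hα, hβ]; ring⟩
    · right; right; left
      refine ⟨?_, by rw [e2, hα]; ring, ?_⟩
      · rw [e1, hβ, hx]; simp [mul_comm]
      · rw [e3, hα, hβ, inv_mul_cancel₀ hbk]; ring
    · right; left
      refine ⟨by rw [e1, hβ]; ring, ?_, ?_⟩
      · rw [e2, hα, hy]; simp [Pi.smul_apply, smul_eq_mul, mul_comm]
      · rw [e3, hα, hβ, inv_mul_cancel₀ hak]; ring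
    · right; right; right
      refine ⟨?_, ?_, ?_⟩
      · rw [e1, hβ, hx]; simp [mul_comm]
      · rw [e2, hα, hy]; simp [Pi.smul_apply, smul_eq_mul, mul_comm]
      · rw [e3, hα, hβ, inv_mul_cancel₀ hak, inv_mul_cancel₀ hbk]
        rw [one_add_one_eq_two]
        exact h2
  -- witnesses
  set x3 : Fin n → F := x + y with hx3
  have hx3S : x3 ∈ S := Submodule.add_mem S hxS hyS
  have hx3i : x3 i = x i := by simp [hx3, hyi]
  have hx3j : x3 j = y j := by simp [hx3, hxj]
  have hx3k : x3 k = 0 := by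
    simp only [hx3, Pi.add_apply, hxk, hyk]
    rw [one_add_one_eq_two]; exact h2
  have hzall : ∀ m, (0 : Fin n → F) m ∈ vs m := by
    intro m
    by_cases h1 : m = i
    · subst h1; rw [hvsi]; exact Finset.mem_insert_self _ _
    by_cases hj' : m = j
    · subst hj'; rw [hvsj]; exact Finset.mem_insert_self _ _
    by_cases h3 : m = k
    · subst h3; rw [hvsk]; exact Finset.mem_insert_self _ _
    by_cases h4 : m ∈ D
    · rw [hvsD m h4]; exact Finset.mem_singleton_self _
    · simp only [hvs]; rw [if_neg h1, if_neg hj', if_neg h3, if_neg h4]; exact Finset.mem_univ _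
  have hmemvs : ∀ s : Fin n → F, s i ∈ ({0, x i} : Finset F) → s j ∈ ({0, y j} : Finset F) →
      s k ∈ ({0, 1} : Finset F) → (∀ m ∈ D, s m = 0) → ∀ m, s m ∈ vs m := by
    intro s c1 c2 c3 c4 m
    by_cases h1 : m = i
    · subst h1; rw [hvsi]; exact c1
    by_cases hj' : m = j
    · subst hj'; rw [hvsj]; exact c2
    by_cases h3 : m = k
    · subst h3; rw [hvsk]; exact c3
    by_cases h4 : m ∈ D
    · rw [hvsD m h4, c4 m h4]; exact Finset.mem_singleton_self _
    · simp only [hvs]; rw [if_neg h1, if_neg hj', if_neg h3, if_neg h4]; exact Finset.mem_univ _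
  have hxall : ∀ m, x m ∈ vs m :=
    hmemvs x (by simp) (by rw [hxj]; simp) (by rw [hxk]; simp) hxD
  have hyall : ∀ m, y m ∈ vs m :=
    hmemvs y (by rw [hyi]; simp) (by simp) (by rw [hyk]; simp) hyD
  have hx3all : ∀ m, x3 m ∈ vs m :=
    hmemvs x3 (by rw [hx3i]; simp) (by rw [hx3j]; simp) (by rw [hx3k]; simp)
      (fun m hm => by simp [hx3, hxD m hm, hyD m hm])
  -- vertices
  have hne_u : (⟨i, (0:F)⟩ : Σ _ : Fin n, F) ≠ ⟨i, x i⟩ := by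
    intro h; injection h with h1 h2; exact hxi h2.symm
  have hne_w : (⟨j, (0:F)⟩ : Σ _ : Fin n, F) ≠ ⟨j, y j⟩ := by
    intro h; injection h with h1 h2; exact hyj h2.symm
  have hne_v : (⟨k, (0:F)⟩ : Σ _ : Fin n, F) ≠ ⟨k, (1:F)⟩ := by
    intro h; injection h with h1 h2; exact one_ne_zero h2.symm
  have hfam : ((Finset.univ.filter fun s : Fin n → F => s ∈ S ∧ ∀ m, s m ∈ vs m).image
      fun s => (Finset.univ.filter fun m => s m ∈ vt m).image
        fun m => (⟨m, s m⟩ : Σ _ : Fin n, F)) =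
      {({⟨i, (0:F)⟩, ⟨j, (0:F)⟩, ⟨k, (0:F)⟩} : Finset (Σ _ : Fin n, F)),
       {⟨i, (0:F)⟩, ⟨j, y j⟩, ⟨k, (1:F)⟩},
       {⟨i, x i⟩, ⟨j, (0:F)⟩, ⟨k, (1:F)⟩},
       {⟨i, x i⟩, ⟨j, y j⟩, ⟨k, (0:F)⟩}} := by
    ext A
    simp only [Finset.mem_image, Finset.mem_filter, Finset.mem_univ, true_and,
      Finset.mem_insert, Finset.mem_singleton]
    constructor
    · rintro ⟨s, ⟨hsS, hall⟩, rfl⟩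
      rw [img s hall]
      rcases classify s hsS hall with ⟨e1, e2, e3⟩ | ⟨e1, e2, e3⟩ | ⟨e1, e2, e3⟩ | ⟨e1, e2, e3⟩ <;>
        rw [e1, e2, e3]
      · exact Or.inl rfl
      · exact Or.inr (Or.inl rfl)
      · exact Or.inr (Or.inr (Or.inl rfl))
      · exact Or.inr (Or.inr (Or.inr rfl))
    · rintro (rfl | rfl | rfl | rfl)
      · exact ⟨0, ⟨Submodule.zero_mem S, hzall⟩, by rw [img 0 hzall]; simp⟩
      · refine ⟨y, ⟨hyS, hyall⟩, ?_⟩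
        rw [img y hyall, hyi, hyk]
      · refine ⟨x, ⟨hxS, hxall⟩, ?_⟩
        rw [img x hxall, hxj, hxk]
      · refine ⟨x3, ⟨hx3S, hx3all⟩, ?_⟩
        rw [img x3 hx3all, hx3i, hx3j, hx3k]
  have hcards : ∀ A ∈ ({({⟨i, (0:F)⟩, ⟨j, (0:F)⟩, ⟨k, (0:F)⟩} : Finset (Σ _ : Fin n, F)),
       {⟨i, (0:F)⟩, ⟨j, y j⟩, ⟨k, (1:F)⟩},
       {⟨i, x i⟩, ⟨j, (0:F)⟩, ⟨k, (1:F)⟩},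
       {⟨i, x i⟩, ⟨j, y j⟩, ⟨k, (0:F)⟩}} : Finset (Finset (Σ _ : Fin n, F))), A.card = 3 := by
    have hijS : ∀ (c d : F), (⟨i, c⟩ : Σ _ : Fin n, F) ≠ ⟨j, d⟩ :=
      fun c d h => hij (congrArg Sigma.fst h)
    have hikS : ∀ (c d : F), (⟨i, c⟩ : Σ _ : Fin n, F) ≠ ⟨k, d⟩ :=
      fun c d h => hik (congrArg Sigma.fst h)
    have hjkS : ∀ (c d : F), (⟨j, c⟩ : Σ _ : Fin n, F) ≠ ⟨k, d⟩ :=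
      fun c d h => hjk (congrArg Sigma.fst h)
    intro A hA
    simp only [Finset.mem_insert, Finset.mem_singleton] at hA
    rcases hA with rfl | rfl | rfl | rfl <;>
      rw [Finset.card_insert_of_notMem (by simp [hijS, hikS]),
        Finset.card_insert_of_notMem (by simp [hjkS]), Finset.card_singleton]
  have hijS : ∀ (c d : F), (⟨i, c⟩ : Σ _ : Fin n, F) ≠ ⟨j, d⟩ :=
    fun c d h => hij (congrArg Sigma.fst h)
  have hikS : ∀ (c d : F), (⟨i, c⟩ : Σ _ : Fin n, F) ≠ ⟨k, d⟩ :=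
    fun c d h => hik (congrArg Sigma.fst h)
  have hjkS : ∀ (c d : F), (⟨j, c⟩ : Σ _ : Fin n, F) ≠ ⟨k, d⟩ :=
    fun c d h => hjk (congrArg Sigma.fst h)
  set φ : Fin 6 → Σ _ : Fin n, F :=
    ![⟨i, (0:F)⟩, ⟨i, x i⟩, ⟨j, (0:F)⟩, ⟨j, y j⟩, ⟨k, (0:F)⟩, ⟨k, (1:F)⟩] with hφ
  have f0 : φ 0 = ⟨i, (0:F)⟩ := rfl
  have f1 : φ 1 = ⟨i, x i⟩ := rfl
  have f2 : φ 2 = ⟨j, (0:F)⟩ := rfl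
  have f3 : φ 3 = ⟨j, y j⟩ := rfl
  have f4 : φ 4 = ⟨k, (0:F)⟩ := rfl
  have f5 : φ 5 = ⟨k, (1:F)⟩ := rfl
  refine ⟨Idel vs, Jcon vs vt, φ, disjoint_IJ vs vt, ?_, ?_⟩
  · intro t t' h
    fin_cases t <;> fin_cases t' <;>
      first
        | rfl
        | exact absurd h hne_u
        | exact absurd h.symm hne_u
        | exact absurd h hne_w
        | exact absurd h.symm hne_w
        | exact absurd h hne_v
        | exact absurd h.symm hne_v
        | exact absurd h (hijS _ _)
        | exact absurd h.symm (hijS _ _)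
        | exact absurd h (hikS _ _)
        | exact absurd h.symm (hikS _ _)
        | exact absurd h (hjkS _ _)
        | exact absurd h.symm (hjkS _ _)
  · rw [key_minor, hfam, minimalSets_of_card _ 3 hcards]
    simp only [Q6, Finset.image_insert, Finset.image_singleton, f0, f1, f2, f3, f4, f5]
    ext B
    simp only [Finset.mem_insert, Finset.mem_singleton, Finset.ext_iff]

end Constructions

end Stmt10

/-- let `n ≥ 3`, `q` a prime power and `S ⊆ GF(q)^n` a subspace.  If
`mult S` has no `Δ₃` minor and `S` has no basis of vectors with pairwise disjoint
supports, then `q` is a power of 2 and `mult S` has `Q₆` as a minor. -/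
theorem stmt10 {F : Type*} [Field F] [Fintype F] {n : ℕ} (hn : 3 ≤ n)
    (S : Submodule F (Fin n → F))
    (hD : ¬ HasMinorIso (multSub S) Delta3)
    (hB : ¬ HasDisjointSupportBasis S) :
    (∃ k : ℕ, Fintype.card F = 2 ^ k) ∧ HasMinorIso (multSub S) Q6 := by
  have hcfg : Stmt10.GoodConfig S := by
    obtain ⟨D, hT, hNB⟩ := Stmt10.lemA (Module.finrank F S) S le_rfl hB
    exact Stmt10.goodConfig_of_slice (Stmt10.lemB (Module.finrank F _) _ le_rfl hT hNB)
  have h2 : (2:F) = 0 := by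
    by_contra h2
    exact hD (Stmt10.delta3_of_config hcfg h2)
  constructor
  · have hdvd : ringChar F ∣ 2 := by
      rw [← CharP.cast_eq_zero_iff F (ringChar F) 2]
      exact_mod_cast h2
    have hp : Nat.Prime (ringChar F) := CharP.char_is_prime F (ringChar F)
    have h2' : ringChar F = 2 := (Nat.prime_dvd_prime_iff_eq hp Nat.prime_two).1 hdvd
    haveI : CharP F 2 := h2' ▸ ringChar.charP F
    obtain ⟨m, -, hcard⟩ := FiniteField.card F 2
    exact ⟨m, hcard⟩
  · exact Stmt10.q6_of_config hcfg h2
end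
end

section
/- Let n >= 3, let q be a prime power, and let S be a subspace of GF(q)^n. Then Matroid(S) is isomorphic to the cycle matroid of the graph A_n consisting of two vertices joined by n parallel edges if and only if S is isomorphic (via bijections applied coordinatewise, i.e., via nonzero coordinate scalings) to {x in GF(q)^n : x_1 + ... + x_n = 0}. -/
open scoped Classical
noncomputable section

/-- The circuits of `Matroid(S)`: the inclusion-wise minimal supports of nonzero vectors
of `S`. -/
def circuitSet {F : Type*} [Field F] {ι : Type*} [Fintype ι] (S : Submodule F (ι → F)) :
    Set (Finset ι) :=
  {C | (∃ x ∈ S, x ≠ 0 ∧ suppF x = C) ∧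
       ∀ C', (∃ x ∈ S, x ≠ 0 ∧ suppF x = C') → C' ⊆ C → C' = C}

section Aux

variable {F : Type*} [Field F] {n : ℕ}

lemma mem_suppF {ι : Type*} [Fintype ι] (x : ι → F) (i : ι) :
    i ∈ suppF x ↔ x i ≠ 0 := by simp [suppF]

lemma sum_eq_sum_suppF (c x : Fin n → F) :
    ∑ i, c i * x i = ∑ i ∈ suppF x, c i * x i := by
  rw [suppF]
  exact (Finset.sum_filter_of_ne (fun i _ h => by
    intro hx; exact h (by rw [hx, mul_zero]))).symm

/-- If `S = ker (x ↦ ∑ c i x i)` with all `c i ≠ 0`, then every nonzero vector of `S`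
has support of size at least 2. -/
lemma two_le_card_suppF (c : Fin n → F) (hc : ∀ i, c i ≠ 0) (x : Fin n → F)
    (hx : ∑ i, c i * x i = 0) (hx0 : x ≠ 0) : 2 ≤ (suppF x).card := by
  obtain ⟨i, hi⟩ := Function.ne_iff.mp hx0
  have hi' : i ∈ suppF x := (mem_suppF x i).mpr hi
  by_contra hlt
  push_neg at hlt
  have h1 : (suppF x).card = 1 := le_antisymm (by omega) (Finset.card_pos.mpr ⟨i, hi'⟩)
  obtain ⟨a, ha⟩ := Finset.card_eq_one.mp h1
  have : (0 : F) = c a * x a := by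
    rw [← hx, sum_eq_sum_suppF, ha, Finset.sum_singleton]
  have hxa : x a ≠ 0 := by
    have : a ∈ suppF x := ha ▸ Finset.mem_singleton_self a
    exact (mem_suppF x a).mp this
  exact (mul_ne_zero (hc a) hxa) this.symm

/-- The vector supported on `{i, j}` lying in the kernel of `∑ c i x i`. -/
def pv (c : Fin n → F) (i j : Fin n) : Fin n → F :=
  Pi.single i (c j) - Pi.single j (c i)

lemma pv_sum (c : Fin n → F) (i j : Fin n) : ∑ k, c k * pv c i j k = 0 := by
  simp only [pv, Pi.sub_apply, mul_sub, Finset.sum_sub_distrib, Pi.single_apply,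
    mul_ite, mul_zero, Finset.sum_ite_eq', Finset.mem_univ, if_true]
  ring

lemma pv_apply_i (c : Fin n → F) {i j : Fin n} (hij : i ≠ j) : pv c i j i = c j := by
  simp [pv, Pi.single_apply, Ne.symm hij]

lemma pv_apply_j (c : Fin n → F) {i j : Fin n} (hij : i ≠ j) : pv c i j j = -(c i) := by
  simp [pv, Pi.single_apply, hij]

lemma pv_apply_other (c : Fin n → F) {i j k : Fin n} (hki : k ≠ i) (hkj : k ≠ j) :
    pv c i j k = 0 := by
  simp [pv, Pi.single_apply, Ne.symm hki, Ne.symm hkj]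

lemma pv_supp (c : Fin n → F) (hc : ∀ i, c i ≠ 0) {i j : Fin n} (hij : i ≠ j) :
    suppF (pv c i j) = {i, j} := by
  ext k
  rw [mem_suppF, Finset.mem_insert, Finset.mem_singleton]
  by_cases hki : k = i
  · subst hki
    rw [pv_apply_i c hij]
    simp [hc j]
  · by_cases hkj : k = j
    · subst hkj
      rw [pv_apply_j c hij]
      simp [Ne.symm hki, hc i]
    · rw [pv_apply_other c hki hkj]
      simp [hki, hkj]

lemma pv_ne_zero (c : Fin n → F) (hc : ∀ i, c i ≠ 0) {i j : Fin n} (hij : i ≠ j) :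
    pv c i j ≠ 0 := by
  intro h
  have : pv c i j i = 0 := by rw [h]; rfl
  rw [pv_apply_i c hij] at this
  exact hc j this

end Aux

/-- for `n ≥ 3` and a subspace `S ⊆ GF(q)^n`, `Matroid(S)` is (isomorphic
to) the cycle matroid of `A_n` — the matroid on `[n]` whose circuits are exactly the
2-element subsets — if and only if `S` is obtained from `{x : x_1 + ⋯ + x_n = 0}` by
nonzero coordinatewise scalings, i.e. `S = {x : ∑ i, c i * x i = 0}` for some `c` with
all entries nonzero. -/
theorem stmt11 {F : Type*} [Field F] [Fintype F] {n : ℕ} (hn : 3 ≤ n)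
    (S : Submodule F (Fin n → F)) :
    circuitSet S = {C : Finset (Fin n) | C.card = 2} ↔
      ∃ c : Fin n → F, (∀ i, c i ≠ 0) ∧ ∀ x : Fin n → F, x ∈ S ↔ ∑ i, c i * x i = 0 := by
  haveI : NeZero n := ⟨by omega⟩
  constructor
  · intro h
    have hpair : ∀ i j : Fin n, i ≠ j → ({i, j} : Finset (Fin n)) ∈ circuitSet S := by
      intro i j hij
      rw [h]
      exact Finset.card_pair hij
    set i1 : Fin n := ⟨1, by omega⟩ with hi1
    have hi1ne : i1 ≠ 0 := by
      simp only [hi1, Fin.ne_iff_vne, Fin.val_zero]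
      omega
    -- no nonzero vector of S has support ⊆ {0}
    have hsupp1 : ∀ z ∈ S, suppF z ⊆ {(0 : Fin n)} → z = 0 := by
      intro z hz hsub
      by_contra hz0
      obtain ⟨-, hmin⟩ := hpair 0 i1 (Ne.symm hi1ne)
      have hzsupp : suppF z = {(0 : Fin n)} := by
        rcases Finset.subset_singleton_iff.mp hsub with hemp | h
        · exfalso
          apply hz0
          funext k
          by_contra hk
          have : k ∈ suppF z := (mem_suppF z k).mpr hk
          rw [hemp] at this
          exact absurd this (Finset.notMem_empty k)
        · exact h
      have heq := hmin (suppF z) ⟨z, hz, hz0, rfl⟩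
        (by rw [hzsupp]; intro m hm; rw [Finset.mem_singleton] at hm;
            rw [hm]; exact Finset.mem_insert_self _ _)
      rw [hzsupp] at heq
      have : i1 ∈ ({(0 : Fin n)} : Finset (Fin n)) := by
        rw [heq]; exact Finset.mem_insert_of_mem (Finset.mem_singleton_self _)
      rw [Finset.mem_singleton] at this
      exact hi1ne this
    -- choose canonical vectors with support {0, i}
    have hex : ∀ i : Fin n, ∃ v : Fin n → F, i ≠ 0 →
        (v ∈ S ∧ v 0 = 1 ∧ v i ≠ 0 ∧ ∀ j, j ≠ 0 → j ≠ i → v j = 0) := by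
      intro i
      by_cases hi : i = 0
      · exact ⟨0, fun hne => absurd hi hne⟩
      · obtain ⟨⟨x, hxS, hx0, hxsupp⟩, -⟩ := hpair 0 i (Ne.symm hi)
        have h0 : x 0 ≠ 0 := by
          rw [← mem_suppF, hxsupp]; exact Finset.mem_insert_self _ _
        have hii : x i ≠ 0 := by
          rw [← mem_suppF, hxsupp]
          exact Finset.mem_insert_of_mem (Finset.mem_singleton_self _)
        refine ⟨(x 0)⁻¹ • x, fun _ => ⟨S.smul_mem _ hxS, ?_, ?_, ?_⟩⟩
        · simp [inv_mul_cancel₀ h0]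
        · simp only [Pi.smul_apply, smul_eq_mul]
          exact mul_ne_zero (inv_ne_zero h0) hii
        · intro j hj0 hji
          have : x j = 0 := by
            by_contra hxj
            have : j ∈ suppF x := (mem_suppF x j).mpr hxj
            rw [hxsupp, Finset.mem_insert, Finset.mem_singleton] at this
            tauto
          simp [this]
    choose w hw using hex
    refine ⟨fun i => if i = 0 then 1 else -((w i i)⁻¹), ?_, ?_⟩
    · intro i
      by_cases hi : i = 0
      · simp [hi]
      · simp only [if_neg hi]
        exact neg_ne_zero.mpr (inv_ne_zero (hw i hi).2.2.1)
    · intro x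
      set c : Fin n → F := fun i => if i = 0 then 1 else -((w i i)⁻¹) with hc
      -- the interpolant y
      set y : Fin n → F := ∑ i ∈ Finset.univ.erase 0, ((w i i)⁻¹ * x i) • w i with hy
      have hyS : y ∈ S :=
        Submodule.sum_mem _ fun i hi => S.smul_mem _ ((hw i (Finset.ne_of_mem_erase hi)).1)
      have hyj : ∀ j : Fin n, j ≠ 0 → y j = x j := by
        intro j hj
        rw [hy, Finset.sum_apply]
        rw [Finset.sum_eq_single_of_mem j (Finset.mem_erase.mpr ⟨hj, Finset.mem_univ j⟩)]
        · have hwj : w j j ≠ 0 := (hw j hj).2.2.1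
          simp only [Pi.smul_apply, smul_eq_mul]
          field_simp
        · intro i hi hne
          have : w i j = 0 := (hw i (Finset.ne_of_mem_erase hi)).2.2.2 j hj (Ne.symm hne)
          simp [this]
      have hy0 : x 0 - y 0 = ∑ i, c i * x i := by
        have h1 : y 0 = ∑ i ∈ Finset.univ.erase 0, (w i i)⁻¹ * x i := by
          rw [hy, Finset.sum_apply]
          apply Finset.sum_congr rfl
          intro i hi
          have : w i 0 = 1 := (hw i (Finset.ne_of_mem_erase hi)).2.1
          simp [this]
        have h2 : ∑ i, c i * x i
            = c 0 * x 0 + ∑ i ∈ Finset.univ.erase 0, c i * x i :=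
          (Finset.add_sum_erase _ _ (Finset.mem_univ (0 : Fin n))).symm
        have hc0 : c 0 = 1 := by simp [hc]
        have h3 : ∑ i ∈ Finset.univ.erase 0, c i * x i
            = -∑ i ∈ Finset.univ.erase 0, (w i i)⁻¹ * x i := by
          rw [← Finset.sum_neg_distrib]
          apply Finset.sum_congr rfl
          intro i hi
          have : c i = -((w i i)⁻¹) := by
            simp [hc, Finset.ne_of_mem_erase hi]
          rw [this]; ring
        rw [h2, h1, hc0, one_mul, h3]
        ring
      constructor
      · intro hxS
        have hxy : x - y ∈ S := S.sub_mem hxS hyS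
        have hsub : suppF (x - y) ⊆ {(0 : Fin n)} := by
          intro j hj
          rw [mem_suppF] at hj
          rw [Finset.mem_singleton]
          by_contra hj0
          exact hj (by simp [hyj j hj0])
        have := hsupp1 _ hxy hsub
        have h0 : x 0 - y 0 = 0 := by
          have := congrFun this 0
          simpa using this
        rw [← hy0, h0]
      · intro hsum
        have hxy : x = y := by
          funext j
          by_cases hj : j = 0
          · subst hj
            have : x 0 - y 0 = 0 := by rw [hy0, hsum]
            exact sub_eq_zero.mp this
          · exact (hyj j hj).symm
        rw [hxy]; exact hyS
  · rintro ⟨c, hc, hS⟩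
    ext C
    simp only [circuitSet, Set.mem_setOf_eq]
    have hmin2 : ∀ x ∈ S, x ≠ 0 → 2 ≤ (suppF x).card := by
      intro x hx hx0
      exact two_le_card_suppF c hc x ((hS x).mp hx) hx0
    constructor
    · rintro ⟨⟨x, hxS, hx0, hxsupp⟩, hmin⟩
      have h2 : 2 ≤ C.card := hxsupp ▸ hmin2 x hxS hx0
      obtain ⟨i, hi, j, hj, hij⟩ := Finset.one_lt_card.mp (show 1 < C.card by omega)
      have hpvS : pv c i j ∈ S := (hS _).mpr (pv_sum c i j)
      have heq : ({i, j} : Finset (Fin n)) = C := by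
        apply hmin
        · exact ⟨pv c i j, hpvS, pv_ne_zero c hc hij, pv_supp c hc hij⟩
        · intro k hk
          rw [Finset.mem_insert, Finset.mem_singleton] at hk
          rcases hk with rfl | rfl <;> assumption
      rw [← heq]
      exact Finset.card_pair hij
    · intro hC
      obtain ⟨i, j, hij, rfl⟩ := Finset.card_eq_two.mp hC
      refine ⟨⟨pv c i j, (hS _).mpr (pv_sum c i j), pv_ne_zero c hc hij,
        pv_supp c hc hij⟩, ?_⟩
      rintro C' ⟨z, hzS, hz0, rfl⟩ hsub
      apply Finset.eq_of_subset_of_card_le hsub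
      rw [Finset.card_pair hij]
      exact hmin2 z hzS hz0
end
end

section
/- Let n >= 3, let q be a power of 2, let S = {x in GF(q)^n : x_1 + ... + x_n = 0}, and let alpha in GF(q)^n with sigma := alpha_1 + ... + alpha_n != 0. A subset C of U_1 cup ... cup U_n (where U_i = GF(q) - {alpha_i}) is a set of the form {x_1,...,x_n} - {alpha_1,...,alpha_n} for some x in S with x_i in {alpha_i} cup U_i matching the contraction, if and only if C contains at most one element of each U_i and the sum of the elements of C equals sigma plus the sum of alpha_i over those i with C cap U_i nonempty. -/
open scoped Classical
noncomputable section

/-- let `q` be a power of 2, `n ≥ 3`, `S = {x ∈ GF(q)^n : ∑ x i = 0}`, and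
`α ∈ GF(q)^n` with `σ := ∑ α i ≠ 0`.  A set `C` of elements of the localized ground set
(pairs `(i, v)` with `v ≠ α i`, i.e. `v ∈ U i = GF(q) - {α i}`) is of the form
`{x_1, …, x_n} - {α_1, …, α_n}` for some `x ∈ S` iff `C` contains at most one element of
each `U i` and the sum of the elements of `C` equals `σ` plus the sum of `α i` over the
coordinates `i` that `C` meets. -/
theorem stmt12 {F : Type*} [Field F] [Fintype F] (k : ℕ) (hk : 0 < k)
    (hq : Fintype.card F = 2 ^ k) {n : ℕ} (hn : 3 ≤ n)
    (α : Fin n → F) (σ : F) (hσ : σ = ∑ i, α i) (hσ0 : σ ≠ 0)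
    (C : Finset (Σ _ : Fin n, F)) (hC : ∀ e ∈ C, e.2 ≠ α e.1) :
    (∃ x : Fin n → F, (∑ i, x i) = 0 ∧
        C = (Finset.univ.image fun i => (⟨i, x i⟩ : Σ _ : Fin n, F)) \
            (Finset.univ.image fun i => (⟨i, α i⟩ : Σ _ : Fin n, F)))
      ↔ ((∀ i : Fin n, (C.filter fun e => e.1 = i).card ≤ 1) ∧
          (∑ e ∈ C, e.2) =
            σ + ∑ i ∈ Finset.univ.filter fun i : Fin n => ∃ e ∈ C, e.1 = i, α i) := by
  -- characteristic 2
  haveI hch2 : CharP F 2 := by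
    have hp : (ringChar F).Prime := CharP.char_is_prime F _
    obtain ⟨m, hp', hcard⟩ := FiniteField.card F (ringChar F)
    have h2 : ringChar F ∣ 2 ^ k := by
      rw [← hq, hcard]; exact dvd_pow_self _ m.ne_zero
    have := Nat.Prime.dvd_of_dvd_pow hp h2
    have : ringChar F = 2 := (Nat.prime_dvd_prime_iff_eq hp Nat.prime_two).mp this
    exact this ▸ ringChar.charP F
  have hadd : ∀ a : F, a + a = 0 := CharTwo.add_self_eq_zero
  have heq : ∀ a b : F, a + b = 0 → a = b := by
    intro a b h
    have : a = -b := eq_neg_of_add_eq_zero_left h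
    rwa [CharTwo.neg_eq] at this
  -- membership in images
  have hmem : ∀ (y : Fin n → F) (e : Σ _ : Fin n, F),
      e ∈ (Finset.univ.image fun i => (⟨i, y i⟩ : Σ _ : Fin n, F)) ↔ e.2 = y e.1 := by
    rintro y ⟨i, v⟩
    simp [Finset.mem_image, Sigma.ext_iff, eq_comm]
  constructor
  · rintro ⟨x, hx0, rfl⟩
    have hCmem : ∀ e : Σ _ : Fin n, F,
        e ∈ (Finset.univ.image fun i => (⟨i, x i⟩ : Σ _ : Fin n, F)) \
            (Finset.univ.image fun i => (⟨i, α i⟩ : Σ _ : Fin n, F))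
          ↔ e.2 = x e.1 ∧ e.2 ≠ α e.1 := by
      intro e; rw [Finset.mem_sdiff, hmem, hmem]
    set D := (Finset.univ.image fun i => (⟨i, x i⟩ : Σ _ : Fin n, F)) \
            (Finset.univ.image fun i => (⟨i, α i⟩ : Σ _ : Fin n, F)) with hD
    set T : Finset (Fin n) := Finset.univ.filter (fun i => x i ≠ α i) with hT
    have hDT : D = T.image fun i => (⟨i, x i⟩ : Σ _ : Fin n, F) := by
      ext ⟨i, v⟩
      rw [hCmem]
      simp only [Finset.mem_image, hT, Finset.mem_filter, Finset.mem_univ, true_and,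
        Sigma.ext_iff]
      constructor
      · rintro ⟨rfl, hv⟩; exact ⟨i, hv, rfl, heq_of_eq rfl⟩
      · rintro ⟨j, hj, rfl, hv⟩; exact ⟨(eq_of_heq hv).symm, (eq_of_heq hv) ▸ hj⟩
    constructor
    · intro i
      have hsub : D.filter (fun e => e.1 = i) ⊆ {⟨i, x i⟩} := by
        intro e he
        rw [Finset.mem_filter] at he
        obtain ⟨he1, he2⟩ := he
        rw [hCmem] at he1
        rw [Finset.mem_singleton]
        obtain ⟨j, v⟩ := e
        cases he2
        exact Sigma.ext rfl (heq_of_eq he1.1)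
      calc (D.filter (fun e => e.1 = i)).card ≤ ({⟨i, x i⟩} : Finset _).card :=
            Finset.card_le_card hsub
        _ = 1 := Finset.card_singleton _
    · have hfil : (Finset.univ.filter fun i : Fin n => ∃ e ∈ D, e.1 = i) = T := by
        ext i
        simp only [Finset.mem_filter, Finset.mem_univ, true_and, hT]
        constructor
        · rintro ⟨e, he, rfl⟩
          rw [hCmem] at he
          rw [← he.1]; exact he.2
        · intro hi
          exact ⟨⟨i, x i⟩, (hCmem _).mpr ⟨rfl, hi⟩, rfl⟩
      rw [hfil, hDT, Finset.sum_image (by intro a _ b _ h; exact congrArg Sigma.fst h)]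
      -- goal: ∑ i in T, x i = σ + ∑ i in T, α i
      apply heq
      have hsplit : ∀ y : Fin n → F, ∑ i, y i = ∑ i ∈ T, y i + ∑ i ∈ Tᶜ, y i := by
        intro y; rw [Finset.sum_add_sum_compl]
      have hxc : ∑ i ∈ Tᶜ, x i = ∑ i ∈ Tᶜ, α i := by
        apply Finset.sum_congr rfl
        intro i hi
        simp only [hT, Finset.mem_compl, Finset.mem_filter, Finset.mem_univ, true_and,
          not_not] at hi
        exact hi
      have h1 : ∑ i ∈ T, x i + ∑ i ∈ Tᶜ, α i = 0 := by
        rw [← hxc, Finset.sum_add_sum_compl, hx0]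
      have h2 : σ = ∑ i ∈ T, α i + ∑ i ∈ Tᶜ, α i := by
        rw [Finset.sum_add_sum_compl, hσ]
      rw [h2]
      calc ∑ i ∈ T, x i + (∑ i ∈ T, α i + ∑ i ∈ Tᶜ, α i + ∑ i ∈ T, α i)
          = (∑ i ∈ T, x i + ∑ i ∈ Tᶜ, α i) + (∑ i ∈ T, α i + ∑ i ∈ T, α i) := by ring
        _ = 0 := by rw [h1, hadd, add_zero]
  · rintro ⟨hcard, hsum⟩
    have huniq : ∀ (i : Fin n) (v w : F), (⟨i, v⟩ : Σ _ : Fin n, F) ∈ C →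
        (⟨i, w⟩ : Σ _ : Fin n, F) ∈ C → v = w := by
      intro i v w hv hw
      have := Finset.card_le_one.mp (hcard i) ⟨i, v⟩ (Finset.mem_filter.mpr ⟨hv, rfl⟩)
        ⟨i, w⟩ (Finset.mem_filter.mpr ⟨hw, rfl⟩)
      exact eq_of_heq (Sigma.ext_iff.mp this).2
    set x : Fin n → F := fun i =>
      if h : ∃ v : F, (⟨i, v⟩ : Σ _ : Fin n, F) ∈ C then h.choose else α i with hxdef
    have f1 : ∀ (i : Fin n) (v : F), (⟨i, v⟩ : Σ _ : Fin n, F) ∈ C → x i = v := by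
      intro i v hv
      have h : ∃ v : F, (⟨i, v⟩ : Σ _ : Fin n, F) ∈ C := ⟨v, hv⟩
      simp only [hxdef, dif_pos h]
      exact huniq i _ _ h.choose_spec hv
    have f2 : ∀ i : Fin n, (¬ ∃ v : F, (⟨i, v⟩ : Σ _ : Fin n, F) ∈ C) → x i = α i := by
      intro i h; simp only [hxdef, dif_neg h]
    set T : Finset (Fin n) := Finset.univ.filter (fun i : Fin n => ∃ e ∈ C, e.1 = i)
      with hT
    have hTmem : ∀ i : Fin n, i ∈ T ↔ ∃ v : F, (⟨i, v⟩ : Σ _ : Fin n, F) ∈ C := by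
      intro i
      simp only [hT, Finset.mem_filter, Finset.mem_univ, true_and]
      constructor
      · rintro ⟨⟨j, v⟩, he, rfl⟩; exact ⟨v, he⟩
      · rintro ⟨v, hv⟩; exact ⟨⟨i, v⟩, hv, rfl⟩
    have hCT : C = T.image fun i => (⟨i, x i⟩ : Σ _ : Fin n, F) := by
      ext ⟨i, v⟩
      simp only [Finset.mem_image, Sigma.ext_iff]
      constructor
      · intro hv
        exact ⟨i, (hTmem i).mpr ⟨v, hv⟩, rfl, heq_of_eq (f1 i v hv)⟩
      · rintro ⟨j, hj, rfl, hv⟩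
        obtain ⟨w, hw⟩ := (hTmem j).mp hj
        rw [← eq_of_heq hv, f1 j w hw]
        exact hw
    have hsumT : ∑ e ∈ C, e.2 = ∑ i ∈ T, x i := by
      rw [hCT, Finset.sum_image (by intro a _ b _ h; exact congrArg Sigma.fst h)]
    refine ⟨x, ?_, ?_⟩
    · have hxc : ∑ i ∈ Tᶜ, x i = ∑ i ∈ Tᶜ, α i := by
        apply Finset.sum_congr rfl
        intro i hi
        rw [Finset.mem_compl] at hi
        exact f2 i (fun h => hi ((hTmem i).mpr h))
      rw [← Finset.sum_add_sum_compl T, hxc, ← hsumT, hsum, add_assoc,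
        Finset.sum_add_sum_compl, ← hσ]
      exact hadd σ
    · ext e
      rw [Finset.mem_sdiff, hmem, hmem]
      obtain ⟨i, v⟩ := e
      constructor
      · intro hv
        exact ⟨(f1 i v hv).symm, hC _ hv⟩
      · rintro ⟨hv1, hv2⟩
        have hi : ∃ w : F, (⟨i, w⟩ : Σ _ : Fin n, F) ∈ C := by
          by_contra h
          exact hv2 (hv1.trans (f2 i h))
        obtain ⟨w, hw⟩ := hi
        have : v = w := hv1.trans (f1 i w hw)
        rwa [this]
end
end

section
/- Let T = {x in GF(4)^n : x_1 + ... + x_n = 0} for some n >= 3, and let alpha in GF(4)^n with sigma := sum alpha_i != 0. Then every member of the localization local(T,alpha) has cardinality 1 or 2. -/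
open scoped Classical
noncomputable section

/-- The multipartite uniform clutter of a set `S` of points of `GF(q)^n`. -/
def multPts {F : Type*} {n : ℕ} (S : Finset (Fin n → F)) :
    Finset (Finset (Σ _ : Fin n, F)) :=
  S.image fun x => Finset.univ.image fun i => (⟨i, x i⟩ : Σ _ : Fin n, F)

/-- The localization of `mult S` with respect to `α`: the minor obtained by contracting
the element `α i` from each part. -/
def localCl {F : Type*} {n : ℕ} (S : Finset (Fin n → F)) (α : Fin n → F) :
    Finset (Finset (Σ _ : Fin n, F)) :=
  minorCl (multPts S) ∅ (Finset.univ.image fun i => (⟨i, α i⟩ : Σ _ : Fin n, F))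

open Finset

section aux
variable {F : Type*} {n : ℕ}

lemma Cset_eq (α x : Fin n → F) :
    (Finset.univ.image fun i => (⟨i, x i⟩ : Σ _ : Fin n, F)) \
      (Finset.univ.image fun i => (⟨i, α i⟩ : Σ _ : Fin n, F))
    = (Finset.univ.filter fun i => x i ≠ α i).image fun i => (⟨i, x i⟩ : Σ _ : Fin n, F) := by
  ext ⟨j, c⟩
  simp only [mem_sdiff, mem_image, mem_filter, mem_univ, true_and, Sigma.mk.inj_iff,
    heq_eq_eq]
  constructor
  · rintro ⟨⟨i, rfl, rfl⟩, h2⟩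
    exact ⟨i, fun hc => h2 ⟨i, rfl, hc.symm⟩, rfl, rfl⟩
  · rintro ⟨i, hne, rfl, rfl⟩
    refine ⟨⟨i, rfl, rfl⟩, ?_⟩
    rintro ⟨k, rfl, h⟩
    exact hne h.symm

lemma sigma_inj (x : Fin n → F) :
    Function.Injective fun i => (⟨i, x i⟩ : Σ _ : Fin n, F) :=
  fun a b h => (Sigma.mk.inj_iff.mp h).1

end aux


/-- let `F = GF(4)`, `n ≥ 3`, `T = {x ∈ GF(4)^n : ∑ x i = 0}`, and `α` with
`σ := ∑ α i ≠ 0`.  Then every member of the localization `local(T, α)` has cardinality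
1 or 2. -/
theorem stmt14 {F : Type*} [Field F] [Fintype F] (hq : Fintype.card F = 4)
    {n : ℕ} (hn : 3 ≤ n) (α : Fin n → F) (σ : F) (hσ : σ = ∑ i, α i) (hσ0 : σ ≠ 0) :
    ∀ A ∈ localCl (Finset.univ.filter fun x : Fin n → F => (∑ i, x i) = 0) α,
      A.card = 1 ∨ A.card = 2 := by

  have h4 : (4 : F) = 0 := by
    have := FiniteField.cast_card_eq_zero F
    rw [hq] at this; exact_mod_cast this
  have two0 : (2 : F) = 0 := by
    have h : (2 : F) ^ 2 = 0 := by norm_num; linear_combination h4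
    exact pow_eq_zero_iff (by norm_num) |>.mp h
  have addself : ∀ a : F, a + a = 0 := fun a => by linear_combination a * two0
  have key3 : ∀ a b : F, a ≠ 0 → b ≠ 0 → a ≠ b → a ≠ σ → b ≠ σ → a + b = σ := by
    intro a b ha hb hab haσ hbσ
    have hs : ({0, a, b, σ} : Finset F) = Finset.univ := by
      apply Finset.eq_univ_of_card
      rw [hq, Finset.card_insert_of_notMem (by simp [ha.symm, hb.symm, Ne.symm hσ0]),
        Finset.card_insert_of_notMem (by simp [hab, haσ]),
        Finset.card_insert_of_notMem (by simp [hbσ]), Finset.card_singleton]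
    have hm : a + b ∈ ({0, a, b, σ} : Finset F) := hs ▸ Finset.mem_univ _
    simp only [Finset.mem_insert, Finset.mem_singleton] at hm
    rcases hm with h | h | h | h
    · exact absurd (by linear_combination h - addself b) hab
    · exact absurd (by linear_combination h) hb
    · exact absurd (by linear_combination h) ha
    · exact h
  intro A hA
  set J := Finset.univ.image fun i => (⟨i, α i⟩ : Σ _ : Fin n, F) with hJ
  set T := Finset.univ.filter fun x : Fin n → F => (∑ i, x i) = 0 with hT
  unfold localCl minorCl minimalSets at hA
  simp only [Finset.inter_empty, Finset.filter_true, Finset.mem_filter] at hA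
  obtain ⟨hAG, hmin⟩ := hA
  simp only [Finset.mem_image] at hAG
  obtain ⟨B0, hB0, hB0A⟩ := hAG
  unfold multPts at hB0
  simp only [Finset.mem_image] at hB0
  obtain ⟨x, hxT, rfl⟩ := hB0
  rw [hT, Finset.mem_filter] at hxT
  have hx0 : ∑ i, x i = 0 := hxT.2
  -- the difference function
  set d : Fin n → F := fun i => x i - α i with hd
  set D := Finset.univ.filter fun i => d i ≠ 0 with hD
  have hdne : ∀ i, (x i ≠ α i ↔ d i ≠ 0) := by
    intro i; rw [hd]; simp [sub_ne_zero]
  have sumD : ∑ i ∈ D, d i = σ := by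
    rw [hD, Finset.sum_filter_ne_zero]
    have h1 : ∑ i, d i = ∑ i, x i - ∑ i, α i := by
      rw [hd]; exact Finset.sum_sub_distrib _ _
    rw [h1, hx0, ← hσ]
    linear_combination (-1 : F) * addself σ
  -- find a small subset E of D summing to σ
  have hEex : ∃ E : Finset (Fin n), E ⊆ D ∧ (E.card = 1 ∨ E.card = 2) ∧ ∑ i ∈ E, d i = σ := by
    by_cases hc1 : ∃ i ∈ D, d i = σ
    · obtain ⟨i, hiD, hi⟩ := hc1
      exact ⟨{i}, Finset.singleton_subset_iff.mpr hiD, Or.inl (Finset.card_singleton i),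
        by rw [Finset.sum_singleton, hi]⟩
    · push_neg at hc1
      by_cases hc2 : ∃ i ∈ D, ∃ j ∈ D, d i ≠ d j
      · obtain ⟨i, hiD, j, hjD, hij⟩ := hc2
        have hine : i ≠ j := fun h => hij (by rw [h])
        refine ⟨{i, j}, ?_, Or.inr (Finset.card_pair hine), ?_⟩
        · intro k hk
          rcases Finset.mem_insert.mp hk with rfl | hk
          · exact hiD
          · rw [Finset.mem_singleton.mp hk]; exact hjD
        · rw [Finset.sum_pair hine]
          exact key3 _ _ ((Finset.mem_filter.mp hiD).2) ((Finset.mem_filter.mp hjD).2)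
            hij (hc1 i hiD) (hc1 j hjD)
      · exfalso
        push_neg at hc2
        have hDne : D.Nonempty := by
          rcases Finset.eq_empty_or_nonempty D with h | h
          · rw [h, Finset.sum_empty] at sumD; exact absurd sumD.symm hσ0
          · exact h
        obtain ⟨i0, hi0⟩ := hDne
        have hall : ∀ i ∈ D, d i = d i0 := fun i hi => hc2 i hi i0 hi0
        have hsum : σ = D.card • d i0 := by
          rw [← sumD, Finset.sum_congr rfl hall, Finset.sum_const]
        rw [nsmul_eq_mul] at hsum
        rcases Nat.even_or_odd D.card with ⟨k, hk⟩ | ⟨k, hk⟩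
        · apply hσ0
          rw [hsum, hk]
          push_cast
          linear_combination ((k : F) * d i0) * two0
        · apply hc1 i0 hi0
          rw [hsum, hk]
          push_cast
          linear_combination (-(k : F) * d i0) * two0
  obtain ⟨E, hED, hEcard, hEsum⟩ := hEex
  -- the improved point y
  set y : Fin n → F := fun i => if i ∈ E then x i else α i with hy
  have hyval : ∀ i, y i = α i + if i ∈ E then d i else 0 := by
    intro i
    by_cases h : i ∈ E <;> simp [hy, hd, h]
  have hyT : y ∈ T := by
    rw [hT, Finset.mem_filter]
    refine ⟨Finset.mem_univ _, ?_⟩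
    have : ∑ i, y i = (∑ i, α i) + ∑ i ∈ E, d i := by
      rw [Finset.sum_congr rfl fun i _ => hyval i, Finset.sum_add_distrib,
        Finset.sum_ite_mem, Finset.univ_inter]
    rw [this, ← hσ, hEsum]
    exact addself σ
  -- the improved member and minimality
  have hyMult : (Finset.univ.image fun i => (⟨i, y i⟩ : Σ _ : Fin n, F)) ∈ multPts T := by
    unfold multPts
    exact Finset.mem_image_of_mem _ hyT
  simp only [Finset.mem_image] at hmin
  have h2 := hmin _ ⟨_, hyMult, rfl⟩
  have hBeq := h2 (by
    intro v hv
    rw [← hB0A]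
    simp only [Finset.mem_sdiff, Finset.mem_image, Finset.mem_univ, true_and] at hv ⊢
    obtain ⟨⟨i, rfl⟩, hv2⟩ := hv
    by_cases hiE : i ∈ E
    · refine ⟨⟨i, ?_⟩, hv2⟩
      simp [hy, hiE]
    · exfalso
      exact hv2 ⟨i, by simp [hy, hiE]⟩)
  have hAimg : A = E.image fun i => (⟨i, x i⟩ : Σ _ : Fin n, F) := by
    rw [← hBeq]
    ext v
    simp only [Finset.mem_sdiff, Finset.mem_image, Finset.mem_univ, true_and]
    constructor
    · rintro ⟨⟨i, rfl⟩, hv2⟩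
      by_cases hiE : i ∈ E
      · exact ⟨i, hiE, by simp [hy, hiE]⟩
      · exact absurd ⟨i, by simp [hy, hiE]⟩ hv2
    · rintro ⟨i, hiE, rfl⟩
      refine ⟨⟨i, by simp [hy, hiE]⟩, ?_⟩
      rintro ⟨k, hk⟩
      obtain ⟨h1, h3⟩ := Sigma.mk.inj_iff.mp hk
      subst h1
      exact ((hdne _).mpr (Finset.mem_filter.mp (hED hiE)).2) (eq_of_heq h3).symm
  rw [hAimg, Finset.card_image_of_injective _ (sigma_inj x)]
  exact hEcard
end
end

section
/- Let q = 2^k with k >= 2, and let S be a subspace of GF(q)^4 such that Matroid(S) is isomorphic to the uniform matroid U_{2,4}. Then the multipartite uniform clutter mult(S) has Delta_3 as a clutter minor. -/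
open scoped Classical
noncomputable section

/- ### Auxiliary lemmas -/

attribute [-instance] Sigma.instDecidableEqSigma

lemma mem_mvec' {F : Type*} [Zero F] {w : Fin 4 → F}
    {D : DecidableEq ((_ : Fin 4) × F)} {e : Σ _ : Fin 4, F} :
    e ∈ @Finset.image _ _ D (fun i => (⟨i, w i⟩ : Σ _ : Fin 4, F)) Finset.univ ↔
      e.2 = w e.1 := by
  simp only [Finset.mem_image, Finset.mem_univ, true_and]
  constructor
  · rintro ⟨i, rfl⟩; rfl
  · intro h; exact ⟨e.1, by cases e; simp_all⟩

lemma mvec_eq {F : Type*} [Zero F] (w : Fin 4 → F) :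
    (Finset.univ.image fun i => (⟨i, w i⟩ : Σ _ : Fin 4, F)) =
      {⟨0, w 0⟩, ⟨1, w 1⟩, ⟨2, w 2⟩, ⟨3, w 3⟩} := by
  ext ⟨i, t⟩
  rw [mem_mvec']
  fin_cases i <;> simp

lemma tri_minimal {V : Type*} {a b c : V} (hab : a ≠ b) (hac : a ≠ c) (hbc : b ≠ c) :
    minimalSets ({{a, b}, {b, c}, {a, c}} : Finset (Finset V)) = {{a, b}, {b, c}, {a, c}} := by
  classical
  rw [minimalSets, Finset.filter_true_of_mem]
  intro A hA B hB hBA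
  simp only [Finset.mem_insert, Finset.mem_singleton] at hA hB
  rcases hA with rfl | rfl | rfl <;> rcases hB with rfl | rfl | rfl <;>
    simp_all [Finset.insert_subset_iff] <;> rcases hBA with h | h <;> simp_all

lemma inj3 {V : Type*} {a b c : V} (hab : a ≠ b) (hac : a ≠ c) (hbc : b ≠ c) :
    Function.Injective (fun i : Fin 3 => if i = 0 then a else if i = 1 then b else c) := by
  intro i j h
  fin_cases i <;> fin_cases j <;> simp_all

lemma exists_circuit_subset {F : Type*} [Field F] (S : Submodule F (Fin 4 → F)) :
    ∀ n (x : Fin 4 → F), x ∈ S → x ≠ 0 → (suppF x).card ≤ n →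
      ∃ C ∈ circuitSet S, C ⊆ suppF x := by
  intro n
  induction n with
  | zero =>
    intro x hx hx0 hc
    exfalso
    apply hx0
    funext i
    by_contra hi
    simp only [Pi.zero_apply] at hi
    have : i ∈ suppF x := by simp [suppF, hi]
    simp [Finset.card_eq_zero.mp (Nat.le_zero.mp hc)] at this
  | succ n ih =>
    intro x hx hx0 hc
    by_cases hmin : ∀ C', (∃ y ∈ S, y ≠ 0 ∧ suppF y = C') → C' ⊆ suppF x → C' = suppF x
    · exact ⟨suppF x, ⟨⟨x, hx, hx0, rfl⟩, hmin⟩, subset_rfl⟩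
    · push_neg at hmin
      obtain ⟨C', ⟨y, hy, hy0, rfl⟩, hsub, hne⟩ := hmin
      obtain ⟨C, hC, hCs⟩ := ih y hy hy0 (by
        have := Finset.card_lt_card (lt_of_le_of_ne hsub (by simpa using hne))
        omega)
      exact ⟨C, hC, hCs.trans hsub⟩

set_option maxHeartbeats 1000000 in
theorem stmt17 {F : Type*} [Field F] [Fintype F] (k : ℕ) (hk : 2 ≤ k)
    (hq : Fintype.card F = 2 ^ k) (S : Submodule F (Fin 4 → F))
    (hU : circuitSet S = {C : Finset (Fin 4) | C.card = 3}) :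
    HasMinorIso (multSub S) Delta3 := by
  -- characteristic 2
  obtain ⟨n, hp, hcard⟩ := FiniteField.card F (ringChar F)
  have hchar2 : ringChar F = 2 := by
    have hd : ringChar F ∣ 2 ^ k := by
      rw [← hq, hcard]; exact dvd_pow_self _ (by positivity)
    exact (Nat.prime_dvd_prime_iff_eq hp Nat.prime_two).mp (Nat.Prime.dvd_of_dvd_pow hp hd)
  haveI : CharP F 2 := hchar2 ▸ ringChar.charP F
  have h2 : ∀ a : F, a + a = 0 := fun a => by
    rw [← two_mul, show ((2 : F)) = 0 from by exact_mod_cast CharP.cast_eq_zero F 2, zero_mul]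
  have hcancel : ∀ a b : F, a + b = 0 → a = b := fun a b h => by
    calc a = a + b + b := by rw [add_assoc, h2 b, add_zero]
    _ = b := by rw [h, zero_add]
  -- circuit facts
  have hEx : ∀ C : Finset (Fin 4), C.card = 3 → ∃ v ∈ S, v ≠ 0 ∧ suppF v = C := by
    intro C hC
    have : C ∈ circuitSet S := by rw [hU]; exact hC
    exact this.1
  have hCard : ∀ v, v ∈ S → v ≠ 0 → 3 ≤ (suppF v).card := by
    intro v hv hv0
    obtain ⟨C, hC, hsub⟩ := exists_circuit_subset S (suppF v).card v hv hv0 le_rfl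
    have hC3 : C.card = 3 := by rw [hU] at hC; exact hC
    calc 3 = C.card := hC3.symm
    _ ≤ _ := Finset.card_le_card hsub
  have hsupp_mem : ∀ (v : Fin 4 → F) (i : Fin 4), i ∈ suppF v ↔ v i ≠ 0 := by
    intro v i; simp [suppF]
  have hzero : ∀ v, v ∈ S → v 0 = 0 → v 2 = 0 → v = 0 := by
    intro v hv h0 h2'
    by_contra hvne
    have h3 := hCard v hv hvne
    have hsub : suppF v ⊆ ({1, 3} : Finset (Fin 4)) := by
      intro i hi
      rw [hsupp_mem] at hi
      fin_cases i
      · exact absurd h0 hi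
      · decide
      · exact absurd h2' hi
      · decide
    have hle := Finset.card_le_card hsub
    have : ({1, 3} : Finset (Fin 4)).card = 2 := by decide
    omega
  -- pick the vectors x, y, z
  obtain ⟨x, hxS, hxne, hxsupp⟩ := hEx {0, 1, 3} (by decide)
  obtain ⟨y', hy'S, hy'ne, hy'supp⟩ := hEx {1, 2, 3} (by decide)
  have hx0n : x 0 ≠ 0 := (hsupp_mem x 0).mp (by rw [hxsupp]; decide)
  have hx1n : x 1 ≠ 0 := (hsupp_mem x 1).mp (by rw [hxsupp]; decide)
  have hx3n : x 3 ≠ 0 := (hsupp_mem x 3).mp (by rw [hxsupp]; decide)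
  have hx2 : x 2 = 0 := by
    by_contra h
    have h' : (2 : Fin 4) ∈ suppF x := (hsupp_mem x 2).mpr h
    rw [hxsupp] at h'
    exact absurd h' (by decide)
  have hy'1n : y' 1 ≠ 0 := (hsupp_mem y' 1).mp (by rw [hy'supp]; decide)
  have hy'2n : y' 2 ≠ 0 := (hsupp_mem y' 2).mp (by rw [hy'supp]; decide)
  have hy'3n : y' 3 ≠ 0 := (hsupp_mem y' 3).mp (by rw [hy'supp]; decide)
  have hy'0 : y' 0 = 0 := by
    by_contra h
    have h' : (0 : Fin 4) ∈ suppF y' := (hsupp_mem y' 0).mpr h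
    rw [hy'supp] at h'
    exact absurd h' (by decide)
  set c0 : F := x 1 * (y' 1)⁻¹ with hc0
  have hc0n : c0 ≠ 0 := mul_ne_zero hx1n (inv_ne_zero hy'1n)
  set y : Fin 4 → F := c0 • y' with hydef
  have hyS : y ∈ S := S.smul_mem _ hy'S
  have hy0 : y 0 = 0 := by simp [hydef, hy'0]
  have hy1 : y 1 = x 1 := by
    show c0 * y' 1 = x 1
    rw [hc0]
    field_simp
  have hy2n : y 2 ≠ 0 := by simpa [hydef] using mul_ne_zero hc0n hy'2n
  have hy3n : y 3 ≠ 0 := by simpa [hydef] using mul_ne_zero hc0n hy'3n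
  set z : Fin 4 → F := x + y with hzdef
  have hzS : z ∈ S := S.add_mem hxS hyS
  have hz0 : z 0 = x 0 := by simp [hzdef, hy0]
  have hz1 : z 1 = 0 := by
    show x 1 + y 1 = 0
    rw [hy1]; exact h2 (x 1)
  have hz2 : z 2 = y 2 := by simp [hzdef, hx2]
  have hz3n : z 3 ≠ 0 := by
    intro h3
    have hzne : z ≠ 0 := by
      intro h
      exact hx0n (by rw [← hz0, h]; rfl)
    have hge := hCard z hzS hzne
    have hsub : suppF z ⊆ ({0, 2} : Finset (Fin 4)) := by
      intro i hi
      rw [hsupp_mem] at hi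
      fin_cases i
      · decide
      · exact absurd hz1 hi
      · decide
      · exact absurd h3 hi
    have hle := Finset.card_le_card hsub
    have : ({0, 2} : Finset (Fin 4)).card = 2 := by decide
    omega
  -- the minor data
  set a : Σ _ : Fin 4, F := ⟨0, x 0⟩ with ha
  set b : Σ _ : Fin 4, F := ⟨1, x 1⟩ with hb
  set c : Σ _ : Fin 4, F := ⟨2, y 2⟩ with hc
  set J : Finset (Σ _ : Fin 4, F) := {⟨0, 0⟩, ⟨1, 0⟩, ⟨2, 0⟩, ⟨3, x 3⟩, ⟨3, y 3⟩, ⟨3, z 3⟩}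
    with hJ
  set K : Finset (Σ _ : Fin 4, F) := J ∪ {a, b, c} with hK
  have hab : a ≠ b := by rw [ha, hb]; simp
  have hac : a ≠ c := by rw [ha, hc]; simp
  have hbc : b ≠ c := by rw [hb, hc]; simp
  refine ⟨Finset.univ \ K, J,
    (fun i : Fin 3 => if i = 0 then a else if i = 1 then b else c), ?_, ?_, ?_⟩
  · rw [Finset.disjoint_left]
    intro t ht htJ
    exact (Finset.mem_sdiff.mp ht).2 (Finset.mem_union_left _ htJ)
  · exact inj3 hab hac hbc
  · -- main computation
    have hmemK : ∀ (w : Fin 4 → F) (A : Finset (Σ _ : Fin 4, F)),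
        (∀ e : Σ _ : Fin 4, F, e ∈ A ↔ e.2 = w e.1) →
        ((A ∩ (Finset.univ \ K) = ∅)
          ↔ ∀ i : Fin 4, (⟨i, w i⟩ : Σ _ : Fin 4, F) ∈ K) := by
      intro w A hA
      rw [Finset.eq_empty_iff_forall_notMem]
      constructor
      · intro h i
        by_contra hiK
        exact h ⟨i, w i⟩ (Finset.mem_inter.mpr ⟨(hA _).mpr rfl,
          Finset.mem_sdiff.mpr ⟨Finset.mem_univ _, hiK⟩⟩)
      · rintro h ⟨i, t⟩ he
        obtain ⟨he1, he2⟩ := Finset.mem_inter.mp he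
        rw [hA] at he1
        dsimp at he1
        subst he1
        exact (Finset.mem_sdiff.mp he2).2 (h i)
    have hclass : ∀ w, w ∈ S →
        ((∀ i : Fin 4, (⟨i, w i⟩ : Σ _ : Fin 4, F) ∈ K) ↔ (w = x ∨ w = y ∨ w = z)) := by
      intro w hw
      constructor
      · intro h
        have h0 := h 0
        have hh2 := h 2
        have h3 := h 3
        rw [hK, hJ, ha, hb, hc] at h0 hh2 h3
        simp only [Finset.mem_union, Finset.mem_insert, Finset.mem_singleton,
          Sigma.mk.inj_iff, heq_eq_eq] at h0 hh2 h3
        simp only [Fin.reduceEq, false_and, and_false, false_or, or_false, true_and] at h0 hh2 h3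
        rcases h0 with h0 | h0 <;> rcases hh2 with hw2 | hw2
        · exfalso
          have hw0 : w = 0 := hzero w hw h0 hw2
          rw [hw0] at h3
          simp only [Pi.zero_apply] at h3
          rcases h3 with h3 | h3 | h3
          · exact hx3n h3.symm
          · exact hy3n h3.symm
          · exact hz3n h3.symm
        · right; left
          have hsum : w + y = 0 := by
            apply hzero _ (S.add_mem hw hyS)
            · rw [Pi.add_apply, h0, hy0, add_zero]
            · rw [Pi.add_apply, hw2]; exact h2 (y 2)
          funext i
          exact hcancel _ _ (congrFun hsum i)
        · left
          have hsum : w + x = 0 := by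
            apply hzero _ (S.add_mem hw hxS)
            · rw [Pi.add_apply, h0]; exact h2 (x 0)
            · rw [Pi.add_apply, hw2, hx2, add_zero]
          funext i
          exact hcancel _ _ (congrFun hsum i)
        · right; right
          have hsum : w + z = 0 := by
            apply hzero _ (S.add_mem hw hzS)
            · rw [Pi.add_apply, h0, hz0]; exact h2 (x 0)
            · rw [Pi.add_apply, hw2, hz2]; exact h2 (y 2)
          funext i
          exact hcancel _ _ (congrFun hsum i)
      · rintro (rfl | rfl | rfl) i <;> fin_cases i <;>
          simp [hK, hJ, ha, hb, hc, hx2, hy0, hy1, hz0, hz1, hz2]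
    have hfilt : (multSub S).filter (fun A => A ∩ (Finset.univ \ K) = ∅)
        = ({Finset.univ.image fun i => (⟨i, x i⟩ : Σ _ : Fin 4, F),
            Finset.univ.image fun i => (⟨i, y i⟩ : Σ _ : Fin 4, F),
            Finset.univ.image fun i => (⟨i, z i⟩ : Σ _ : Fin 4, F)} : Finset _) := by
      ext A
      simp only [multSub, Finset.mem_filter, Finset.mem_image, Finset.mem_insert,
        Finset.mem_singleton, Finset.mem_univ, true_and]
      constructor
      · rintro ⟨⟨w, hwS, rfl⟩, hint⟩
        rcases (hclass w hwS).mp ((hmemK w _ (fun e => mem_mvec')).mp hint) with rfl | rfl | rfl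
        · left; ext e; simp only [mem_mvec']
        · right; left; ext e; simp only [mem_mvec']
        · right; right; ext e; simp only [mem_mvec']
      · rintro (rfl | rfl | rfl)
        · exact ⟨⟨x, hxS, by ext e; simp only [mem_mvec']⟩,
            (hmemK x _ (fun e => mem_mvec')).mpr ((hclass x hxS).mpr (Or.inl rfl))⟩
        · exact ⟨⟨y, hyS, by ext e; simp only [mem_mvec']⟩,
            (hmemK y _ (fun e => mem_mvec')).mpr ((hclass y hyS).mpr (Or.inr (Or.inl rfl)))⟩
        · exact ⟨⟨z, hzS, by ext e; simp only [mem_mvec']⟩,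
            (hmemK z _ (fun e => mem_mvec')).mpr ((hclass z hzS).mpr (Or.inr (Or.inr rfl)))⟩
    have hnJa : a ∉ J := by rw [ha, hJ]; simp [hx0n]
    have hnJb : b ∉ J := by rw [hb, hJ]; simp [hx1n]
    have hnJc : c ∉ J := by rw [hc, hJ]; simp [hy2n]
    have hxJ : (Finset.univ.image fun i => (⟨i, x i⟩ : Σ _ : Fin 4, F)) \ J = {a, b} := by
      rw [mvec_eq]
      ext e
      rw [Finset.mem_sdiff]
      constructor
      · rintro ⟨he, heJ⟩
        simp only [Finset.mem_insert, Finset.mem_singleton] at he ⊢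
        rcases he with rfl | rfl | rfl | rfl
        · left; rw [ha]
        · right; rw [hb]
        · exact absurd (by rw [hJ, hx2]; simp) heJ
        · exact absurd (by rw [hJ]; simp) heJ
      · intro he
        simp only [Finset.mem_insert, Finset.mem_singleton] at he ⊢
        rcases he with rfl | rfl
        · exact ⟨by left; rw [ha], hnJa⟩
        · exact ⟨by right; left; rw [hb], hnJb⟩
    have hyJ : (Finset.univ.image fun i => (⟨i, y i⟩ : Σ _ : Fin 4, F)) \ J = {b, c} := by
      rw [mvec_eq]
      ext e
      rw [Finset.mem_sdiff]
      constructor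
      · rintro ⟨he, heJ⟩
        simp only [Finset.mem_insert, Finset.mem_singleton] at he ⊢
        rcases he with rfl | rfl | rfl | rfl
        · exact absurd (by rw [hJ, hy0]; simp) heJ
        · left; rw [hb, hy1]
        · right; rw [hc]
        · exact absurd (by rw [hJ]; simp) heJ
      · intro he
        simp only [Finset.mem_insert, Finset.mem_singleton] at he ⊢
        rcases he with rfl | rfl
        · exact ⟨by right; left; rw [hb, hy1], hnJb⟩
        · exact ⟨by right; right; left; rw [hc], hnJc⟩
    have hzJ : (Finset.univ.image fun i => (⟨i, z i⟩ : Σ _ : Fin 4, F)) \ J = {a, c} := by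
      rw [mvec_eq]
      ext e
      rw [Finset.mem_sdiff]
      constructor
      · rintro ⟨he, heJ⟩
        simp only [Finset.mem_insert, Finset.mem_singleton] at he ⊢
        rcases he with rfl | rfl | rfl | rfl
        · left; rw [ha, hz0]
        · exact absurd (by rw [hJ, hz1]; simp) heJ
        · right; rw [hc, hz2]
        · exact absurd (by rw [hJ]; simp) heJ
      · intro he
        simp only [Finset.mem_insert, Finset.mem_singleton] at he ⊢
        rcases he with rfl | rfl
        · exact ⟨by left; rw [ha, hz0], hnJa⟩
        · exact ⟨by right; right; left; rw [hc, hz2], hnJc⟩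
    have hDelta : Delta3.image
        (fun A => A.image (fun i : Fin 3 => if i = 0 then a else if i = 1 then b else c))
        = ({{a, b}, {b, c}, {a, c}} : Finset (Finset (Σ _ : Fin 4, F))) := by
      simp [Delta3, Finset.image_insert, Finset.image_singleton]
    rw [minorCl]
    convert_to minimalSets (Finset.image (fun A => A \ J)
        ({Finset.univ.image fun i => (⟨i, x i⟩ : Σ _ : Fin 4, F),
          Finset.univ.image fun i => (⟨i, y i⟩ : Σ _ : Fin 4, F),
          Finset.univ.image fun i => (⟨i, z i⟩ : Σ _ : Fin 4, F)} : Finset _)) = _ using 3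
    on_goal 2 => convert hfilt
    on_goal 1 => funext A; congr; exact Subsingleton.elim _ _
    rw [Finset.image_insert, Finset.image_insert, Finset.image_singleton,
      hxJ, hyJ, hzJ]
    convert tri_minimal hab hac hbc
    convert hDelta
end
end
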